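/- arXiv:2004.07643 — 5 statements merged into one kernel-verified Lean document; each statement's English description precedes it below -/
import Mathlib

section
/- For any ergodic shift-invariant measure ν on a subshift X ⊆ {0,1}^ℤ, the chain of inequalities d_ν ≤ D_ν ≤ D = d holds, and consequently the variational principle D = sup_{ν ∈ M(X,S)} D_ν holds. -/
open MeasureTheory Filter Real
open scoped ENNReal

attribute [local instance] Classical.propDecidable

/-- The two-sided binary sequence space `{0,1}^ℤ`. -/
abbrev Omega : Type := ℤ → Bool

/-- The left shift. -/
def shift (x : Omega) : Omega := fun n => x (n + 1)

/-- The cylinder set of a word `W` of length `n`, read from coordinate `0`. -/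
def cyl (n : ℕ) (W : Fin n → Bool) : Set Omega := {x | ∀ i : Fin n, x ((i : ℕ) : ℤ) = W i}

/-- The language of `X`: words of length `n` appearing (at position 0) in some point of `X`. -/
def lang (X : Set Omega) (n : ℕ) : Set (Fin n → Bool) :=
  {W | ∃ x ∈ X, ∀ i : Fin n, x ((i : ℕ) : ℤ) = W i}

/-- Number of ones in a word. -/
def ones {n : ℕ} (W : Fin n → Bool) : ℕ := (Finset.univ.filter fun i => W i = true).card

/-- `maxOnes X n` is the maximal number of ones in an allowed word of length `n`. -/
noncomputable def maxOnes (X : Set Omega) (n : ℕ) : ℕ :=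
  (Finset.univ.filter fun W : Fin n → Bool => W ∈ lang X n).sup ones

/-- `d(X,S)`: the supremum over shift-invariant Borel probability measures concentrated
on `X` of the measure of the cylinder `[1] = {x | x 0 = true}`. -/
noncomputable def dsup (X : Set Omega) : ℝ :=
  ⨆ μ : {μ : Measure Omega // IsProbabilityMeasure μ ∧ μ X = 1 ∧ Measure.map shift μ = μ},
    ((μ : Measure Omega) {x | x 0 = true}).toReal

/-- Maximal number of ones in an allowed word of length `n` of positive `ν`-measure. -/
noncomputable def maxOnesPos (X : Set Omega) (ν : Measure Omega) (n : ℕ) : ℕ :=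
  (Finset.univ.filter fun W : Fin n → Bool => W ∈ lang X n ∧ ν (cyl n W) ≠ 0).sup ones

/-- `D_ν`, the measure-theoretic upper density of ones (the limit of the subadditive
sequence `maxOnesPos X ν n / n`, expressed as its infimum over `n ≥ 1`). -/
noncomputable def Dnu (X : Set Omega) (ν : Measure Omega) : ℝ :=
  ⨅ n : ℕ, (maxOnesPos X ν (n + 1) : ℝ) / (n + 1)

/-- `D`, the topological upper density of ones. -/
noncomputable def Dtop (X : Set Omega) : ℝ :=
  ⨅ n : ℕ, (maxOnes X (n + 1) : ℝ) / (n + 1)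

/-! ### Basic lemmas -/

lemma measurable_shift : Measurable shift :=
  measurable_pi_lambda _ fun n => measurable_pi_apply (n + 1)

lemma shift_iterate_apply (m : ℕ) (x : Omega) (i : ℤ) : shift^[m] x i = x (i + m) := by
  induction m generalizing x i with
  | zero => simp
  | succ m ih =>
    rw [Function.iterate_succ_apply, ih]
    show x (i + m + 1) = _
    congr 1
    push_cast
    ring

lemma mem_iterate_image {X : Set Omega} (hinv : shift '' X = X) (m : ℕ) {x : Omega}
    (hx : x ∈ X) : shift^[m] x ∈ X := by
  induction m with
  | zero => simpa
  | succ m ih =>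
    rw [Function.iterate_succ_apply']
    rw [← hinv]
    exact Set.mem_image_of_mem _ ih

lemma ones_eq_sum {n : ℕ} (W : Fin n → Bool) :
    ones W = ∑ i : Fin n, if W i = true then 1 else 0 := by
  rw [ones, Finset.card_filter]

lemma measurable_coord (i : ℤ) : MeasurableSet {x : Omega | x i = true} := by
  have : {x : Omega | x i = true} = (fun f : Omega => f i) ⁻¹' {true} := by ext x; simp
  rw [this]
  exact (measurable_pi_apply i) (by trivial : MeasurableSet {true})

lemma cyl_measurable (n : ℕ) (W : Fin n → Bool) : MeasurableSet (cyl n W) := by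
  have : cyl n W = ⋂ i : Fin n, {x : Omega | x ((i:ℕ):ℤ) = W i} := by
    ext x; simp [cyl, Set.mem_iInter]
  rw [this]
  refine MeasurableSet.iInter fun i => ?_
  have : {x : Omega | x ((i:ℕ):ℤ) = W i} = (fun f : Omega => f ((i:ℕ):ℤ)) ⁻¹' {W i} := by
    ext x; simp
  rw [this]
  exact (measurable_pi_apply _) (by trivial : MeasurableSet {W i})

/-- splitting a word into prefix and suffix -/
lemma ones_split (m n : ℕ) (W : Fin (m + n) → Bool) :
    ones W = ones (fun i : Fin m => W (Fin.castAdd n i)) +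
      ones (fun i : Fin n => W (Fin.natAdd m i)) := by
  simp only [ones_eq_sum]
  rw [Fin.sum_univ_add]

lemma maxOnes_subadd (X : Set Omega) (hinv : shift '' X = X) (m n : ℕ) :
    maxOnes X (m + n) ≤ maxOnes X m + maxOnes X n := by
  apply Finset.sup_le
  intro W hW
  rw [Finset.mem_filter] at hW
  obtain ⟨x, hxX, hxW⟩ := hW.2
  rw [ones_split m n W]
  have h1 : (fun i : Fin m => W (Fin.castAdd n i)) ∈ lang X m := by
    refine ⟨x, hxX, fun i => ?_⟩
    have := hxW (Fin.castAdd n i)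
    simpa using this
  have h2 : (fun i : Fin n => W (Fin.natAdd m i)) ∈ lang X n := by
    refine ⟨shift^[m] x, mem_iterate_image hinv m hxX, fun i => ?_⟩
    rw [shift_iterate_apply]
    have := hxW (Fin.natAdd m i)
    simp only [Fin.coe_natAdd] at this
    show x ((i:ℕ) + (m:ℤ)) = W (Fin.natAdd m i)
    rw [← this]
    congr 1
    push_cast
    ring
  gcongr
  · exact Finset.le_sup (by simp [h1])
  · exact Finset.le_sup (by simp [h2])

section Inv
variable {μ : Measure Omega} (hm : Measure.map shift μ = μ)

include hm in
lemma map_iterate_eq (m : ℕ) : Measure.map (shift^[m]) μ = μ := by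
  induction m with
  | zero => simp
  | succ m ih =>
    rw [Function.iterate_succ, ← Measure.map_map (measurable_shift.iterate m) measurable_shift,
      hm, ih]

include hm in
lemma measure_preimage_iterate (m : ℕ) {A : Set Omega} (hA : MeasurableSet A) :
    μ (shift^[m] ⁻¹' A) = μ A := by
  conv_rhs => rw [← map_iterate_eq hm m]
  rw [Measure.map_apply (measurable_shift.iterate m) hA]

include hm in
lemma maxOnesPos_subadd (X : Set Omega) (hinv : shift '' X = X) (m n : ℕ) :
    maxOnesPos X μ (m + n) ≤ maxOnesPos X μ m + maxOnesPos X μ n := by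
  apply Finset.sup_le
  intro W hW
  rw [Finset.mem_filter] at hW
  obtain ⟨⟨x, hxX, hxW⟩, hWpos⟩ := hW.2
  rw [ones_split m n W]
  have h1 : (fun i : Fin m => W (Fin.castAdd n i)) ∈ lang X m := by
    refine ⟨x, hxX, fun i => ?_⟩
    have := hxW (Fin.castAdd n i)
    simpa using this
  have h2 : (fun i : Fin n => W (Fin.natAdd m i)) ∈ lang X n := by
    refine ⟨shift^[m] x, mem_iterate_image hinv m hxX, fun i => ?_⟩
    rw [shift_iterate_apply]
    have := hxW (Fin.natAdd m i)
    simp only [Fin.coe_natAdd] at this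
    show x ((i:ℕ) + (m:ℤ)) = W (Fin.natAdd m i)
    rw [← this]
    congr 1
    push_cast
    ring
  have hsub1 : cyl (m + n) W ⊆ cyl m (fun i : Fin m => W (Fin.castAdd n i)) := by
    intro y hy i
    have := hy (Fin.castAdd n i)
    simpa using this
  have hsub2 : cyl (m + n) W ⊆ shift^[m] ⁻¹' (cyl n (fun i : Fin n => W (Fin.natAdd m i))) := by
    intro y hy i
    rw [shift_iterate_apply]
    have := hy (Fin.natAdd m i)
    simp only [Fin.coe_natAdd] at this
    show y ((i:ℕ) + (m:ℤ)) = W (Fin.natAdd m i)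
    rw [← this]
    congr 1
    push_cast
    ring
  have hp1 : μ (cyl m (fun i : Fin m => W (Fin.castAdd n i))) ≠ 0 := fun h0 =>
    hWpos (le_antisymm (le_trans (measure_mono hsub1) h0.le) zero_le)
  have hp2 : μ (cyl n (fun i : Fin n => W (Fin.natAdd m i))) ≠ 0 := by
    intro h0
    apply hWpos
    refine le_antisymm (le_trans (measure_mono hsub2) ?_) zero_le
    rw [measure_preimage_iterate hm m (cyl_measurable n _), h0]
  gcongr
  · exact Finset.le_sup (Finset.mem_filter.2 ⟨Finset.mem_univ _, h1, hp1⟩)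
  · exact Finset.le_sup (Finset.mem_filter.2 ⟨Finset.mem_univ _, h2, hp2⟩)

include hm in
/-- The key lower bound: `n * μ[1] ≤ maxOnesPos n` for invariant probability `μ` on `X`. -/
lemma mul_meas_le_maxOnesPos (X : Set Omega) (hXm : MeasurableSet X)
    [IsProbabilityMeasure μ] (hsupp : μ X = 1) (n : ℕ) :
    (n : ℝ≥0∞) * μ {x | x 0 = true} ≤ (maxOnesPos X μ n : ℝ≥0∞) := by
  -- the word of length n read from x
  set w : Omega → (Fin n → Bool) := fun x i => x ((i:ℕ):ℤ) with hw
  -- a.e. bound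
  have hae : ∀ᵐ x ∂μ, (ones (w x) : ℝ≥0∞) ≤ (maxOnesPos X μ n : ℝ≥0∞) := by
    have hX : ∀ᵐ x ∂μ, x ∈ X := by
      rw [MeasureTheory.ae_iff]
      have : {x | ¬ x ∈ X} = Xᶜ := rfl
      rw [this, measure_compl hXm (measure_ne_top μ X), hsupp, measure_univ, tsub_self]
    have hB : ∀ᵐ x ∂μ, μ (cyl n (w x)) ≠ 0 := by
      rw [MeasureTheory.ae_iff]
      push_neg
      have hsub : {x | μ (cyl n (w x)) = 0} ⊆
          ⋃ (W : Fin n → Bool) (_ : μ (cyl n W) = 0), cyl n W := by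
        intro x hx
        exact Set.mem_iUnion.2 ⟨w x, Set.mem_iUnion.2 ⟨hx, fun i => rfl⟩⟩
      have hnull : μ (⋃ (W : Fin n → Bool) (_ : μ (cyl n W) = 0), cyl n W) = 0 :=
        measure_iUnion_null fun W => measure_iUnion_null fun h => h
      exact le_antisymm (le_trans (measure_mono hsub) hnull.le) zero_le
    filter_upwards [hX, hB] with x hx hb
    have hmem : w x ∈ Finset.univ.filter
        (fun W : Fin n → Bool => W ∈ lang X n ∧ μ (cyl n W) ≠ 0) := by
      simp only [Finset.mem_filter, Finset.mem_univ, true_and]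
      exact ⟨⟨x, hx, fun i => rfl⟩, hb⟩
    have : ones (w x) ≤ maxOnesPos X μ n := Finset.le_sup hmem
    exact_mod_cast this
  -- the integral identity
  have hint : ∫⁻ x, (ones (w x) : ℝ≥0∞) ∂μ = (n : ℝ≥0∞) * μ {x | x 0 = true} := by
    have hpt : ∀ x : Omega, (ones (w x) : ℝ≥0∞)
        = ∑ i : Fin n, Set.indicator {y : Omega | y ((i:ℕ):ℤ) = true} (1 : Omega → ℝ≥0∞) x := by
      intro x
      rw [ones_eq_sum]
      push_cast
      congr 1
      ext i
      by_cases h : x ((i:ℕ):ℤ) = true <;> simp [Set.indicator, h, w]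
    simp only [hpt]
    rw [lintegral_finset_sum]
    · have hcoord : ∀ i : Fin n, μ {y : Omega | y ((i:ℕ):ℤ) = true} = μ {x | x 0 = true} := by
        intro i
        have : {y : Omega | y ((i:ℕ):ℤ) = true} = shift^[(i:ℕ)] ⁻¹' {x | x 0 = true} := by
          ext y
          simp [Set.mem_preimage, shift_iterate_apply]
        rw [this, measure_preimage_iterate hm _ (measurable_coord 0)]
      have hone : ∀ i : Fin n,
          ∫⁻ x, Set.indicator {y : Omega | y ((i:ℕ):ℤ) = true} (1 : Omega → ℝ≥0∞) x ∂μ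
          = μ {x | x 0 = true} := by
        intro i
        rw [lintegral_indicator_one (measurable_coord _), hcoord]
      simp only [hone, Finset.sum_const, Finset.card_univ, Fintype.card_fin, nsmul_eq_mul]
    · intro i _
      exact (measurable_const.indicator (measurable_coord _))
  calc (n : ℝ≥0∞) * μ {x | x 0 = true} = ∫⁻ x, (ones (w x) : ℝ≥0∞) ∂μ := hint.symm
    _ ≤ ∫⁻ _, (maxOnesPos X μ n : ℝ≥0∞) ∂μ := lintegral_mono_ae hae
    _ = (maxOnesPos X μ n : ℝ≥0∞) := by simp

end Inv

/-! ### Fekete limits -/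

lemma fekete_aux {f : ℕ → ℕ} (hsub : ∀ m n, f (m + n) ≤ f m + f n) :
    Tendsto (fun n : ℕ => (f n : ℝ) / n) atTop
      (nhds (⨅ n : ℕ, (f (n + 1) : ℝ) / (n + 1))) := by
  have hS : Subadditive fun n => (f n : ℝ) := by
    intro m n
    show ((f (m+n) : ℝ)) ≤ (f m : ℝ) + (f n : ℝ)
    exact_mod_cast hsub m n
  have hbdd : BddBelow (Set.range fun n : ℕ => (f n : ℝ) / n) := by
    refine ⟨0, ?_⟩
    rintro y ⟨n, rfl⟩
    positivity
  have hlim : hS.lim = ⨅ n : ℕ, (f (n + 1) : ℝ) / (n + 1) := by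
    have h1 : (⨅ n : ℕ, (f (n + 1) : ℝ) / (n + 1))
        = sInf (Set.range fun n : ℕ => (f (n + 1) : ℝ) / ((n : ℝ) + 1)) := rfl
    rw [Subadditive.lim, h1]
    congr 1
    ext y
    constructor
    · rintro ⟨m, hm, rfl⟩
      match m, hm with
      | (k+1), _ =>
        exact ⟨k, by push_cast; ring_nf⟩
    · rintro ⟨k, rfl⟩
      exact ⟨k + 1, by simp, by push_cast; ring_nf⟩
  rw [← hlim]
  exact hS.tendsto_lim hbdd

lemma tendsto_maxOnes (X : Set Omega) (hinv : shift '' X = X) :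
    Tendsto (fun n : ℕ => (maxOnes X n : ℝ) / n) atTop (nhds (Dtop X)) :=
  fekete_aux (maxOnes_subadd X hinv)

lemma tendsto_maxOnesPos (X : Set Omega) (hinv : shift '' X = X) {μ : Measure Omega}
    (hm : Measure.map shift μ = μ) :
    Tendsto (fun n : ℕ => (maxOnesPos X μ n : ℝ) / n) atTop (nhds (Dnu X μ)) :=
  fekete_aux (maxOnesPos_subadd hm X hinv)

/-! ### Easy inequalities -/

lemma maxOnesPos_le_maxOnes (X : Set Omega) (μ : Measure Omega) (n : ℕ) :
    maxOnesPos X μ n ≤ maxOnes X n := by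
  apply Finset.sup_le
  intro W hW
  rw [Finset.mem_filter] at hW
  exact Finset.le_sup (Finset.mem_filter.2 ⟨Finset.mem_univ _, hW.2.1⟩)

lemma Dnu_le_Dtop (X : Set Omega) (μ : Measure Omega) : Dnu X μ ≤ Dtop X := by
  refine ciInf_mono ⟨0, ?_⟩ fun n => ?_
  · rintro y ⟨n, rfl⟩
    positivity
  · apply div_le_div_of_nonneg_right ?_ (by positivity)
    · exact_mod_cast maxOnesPos_le_maxOnes X μ (n + 1)

lemma d_le_Dnu (X : Set Omega) (hXm : MeasurableSet X) {μ : Measure Omega}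
    [IsProbabilityMeasure μ] (hm : Measure.map shift μ = μ) (hsupp : μ X = 1) :
    (μ {x | x 0 = true}).toReal ≤ Dnu X μ := by
  refine le_ciInf fun n => ?_
  have h := mul_meas_le_maxOnesPos hm X hXm hsupp (n + 1)
  have hfin : μ {x | x 0 = true} ≠ ⊤ := measure_ne_top μ _
  have h2 : ((n + 1 : ℕ) : ℝ) * (μ {x | x 0 = true}).toReal
      ≤ (maxOnesPos X μ (n + 1) : ℝ) := by
    have := ENNReal.toReal_mono (by simp) h
    rw [ENNReal.toReal_mul, ENNReal.toReal_natCast] at this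
    simpa using this
  rw [le_div_iff₀ (by positivity)]
  calc (μ {x | x 0 = true}).toReal * ((n : ℝ) + 1)
      = ((n + 1 : ℕ) : ℝ) * (μ {x | x 0 = true}).toReal := by push_cast; ring
    _ ≤ _ := h2

lemma Dnu_nonneg (X : Set Omega) (μ : Measure Omega) : 0 ≤ Dnu X μ := by
  refine le_ciInf fun n => by positivity

/-! ### Coordinates enumeration and basic cylinders -/

noncomputable def enz : ℕ ≃ ℤ := (Denumerable.eqv ℤ).symm

noncomputable def proj (k : ℕ) (x : Omega) : Fin k → Bool := fun j => x (enz (j : ℕ))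

noncomputable def bcyl (k : ℕ) (c : Fin k → Bool) : Set Omega := proj k ⁻¹' {c}

lemma measurable_proj (k : ℕ) : Measurable (proj k) :=
  measurable_pi_lambda _ fun j => measurable_pi_apply _

lemma measurableSet_words {k : ℕ} (S : Set (Fin k → Bool)) : MeasurableSet S :=
  S.toFinite.measurableSet

lemma measurableSet_bcyl (k : ℕ) (c : Fin k → Bool) : MeasurableSet (bcyl k c) :=
  measurable_proj k (measurableSet_words {c})

lemma proj_succ (k : ℕ) (x : Omega) :
    proj (k + 1) x = Fin.snoc (proj k x) (x (enz k)) := by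
  funext j
  refine Fin.lastCases ?_ ?_ j
  · simp [proj, Fin.snoc_last]
  · intro i
    simp [proj, Fin.snoc_castSucc]

lemma init_proj_succ (k : ℕ) (x : Omega) : Fin.init (proj (k + 1) x) = proj k x := by
  rw [proj_succ, Fin.init_snoc]

lemma bcyl_disjoint {k : ℕ} {c c' : Fin k → Bool} (h : c ≠ c') :
    Disjoint (bcyl k c) (bcyl k c') := by
  rw [Set.disjoint_left]
  rintro x hx hx'
  exact h (hx.symm.trans hx')

/-! ### Intervals encoding a consistent family of cylinder probabilities -/

section PFamily

variable (p : ∀ k, (Fin k → Bool) → ℝ)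

noncomputable def addr : ∀ k, (Fin k → Bool) → ℝ
  | 0, _ => 0
  | (k+1), c => addr k (Fin.init c) +
      (if c (Fin.last k) then p (k+1) (Fin.snoc (Fin.init c) false) else 0)

noncomputable def ivl (k : ℕ) (c : Fin k → Bool) : Set ℝ :=
  Set.Ico (addr p k c) (addr p k c + p k c)

variable {p}
variable (hp0 : ∀ k c, 0 ≤ p k c)
    (hp1 : ∀ c : Fin 0 → Bool, p 0 c = 1)
    (hpadd : ∀ k (c : Fin k → Bool), p k c = p (k+1) (Fin.snoc c false) + p (k+1) (Fin.snoc c true))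

lemma addr_snoc_false (k : ℕ) (c : Fin k → Bool) :
    addr p (k+1) (Fin.snoc c false) = addr p k c := by
  simp [addr, Fin.init_snoc, Fin.snoc_last]

lemma addr_snoc_true (k : ℕ) (c : Fin k → Bool) :
    addr p (k+1) (Fin.snoc c true) = addr p k c + p (k+1) (Fin.snoc c false) := by
  simp [addr, Fin.init_snoc, Fin.snoc_last]

include hp0 hpadd in
lemma ivl_subset_init {k : ℕ} (c : Fin (k+1) → Bool) :
    ivl p (k+1) c ⊆ ivl p k (Fin.init c) := by
  have hc : c = Fin.snoc (Fin.init c) (c (Fin.last k)) := (Fin.snoc_init_self c).symm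
  rcases hb : c (Fin.last k) with _ | _
  · -- false
    rw [ivl, ivl]
    conv_lhs => rw [hc, hb]
    rw [addr_snoc_false]
    apply Set.Ico_subset_Ico le_rfl
    rw [hpadd k (Fin.init c)]
    have := hp0 (k+1) (Fin.snoc (Fin.init c) true)
    linarith
  · -- true
    rw [ivl, ivl]
    conv_lhs => rw [hc, hb]
    rw [addr_snoc_true]
    apply Set.Ico_subset_Ico
    · have := hp0 (k+1) (Fin.snoc (Fin.init c) false)
      linarith
    · rw [hpadd k (Fin.init c)]
      have : c = Fin.snoc (Fin.init c) true := by rw [← hb, Fin.snoc_init_self]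
      rw [← this]
      linarith

include hp0 hp1 hpadd in
lemma existsUnique_ivl (k : ℕ) {t : ℝ} (ht : t ∈ Set.Ico (0:ℝ) 1) :
    ∃! c : Fin k → Bool, t ∈ ivl p k c := by
  induction k with
  | zero =>
    refine ⟨fun j => false, ?_, fun c' _ => Subsingleton.elim _ _⟩
    simpa [ivl, addr, hp1] using ht
  | succ k ih =>
    obtain ⟨c, hc, huniq⟩ := ih
    have hmem : t ∈ Set.Ico (addr p k c) (addr p k c + p k c) := hc
    rw [hpadd k c] at hmem
    have h0 := hp0 (k+1) (Fin.snoc c false)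
    have h1 := hp0 (k+1) (Fin.snoc c true)
    by_cases hsplit : t < addr p k c + p (k+1) (Fin.snoc c false)
    · refine ⟨Fin.snoc c false, ?_, ?_⟩
      · show t ∈ Set.Ico (addr p (k+1) (Fin.snoc c false))
            (addr p (k+1) (Fin.snoc c false) + p (k+1) (Fin.snoc c false))
        rw [addr_snoc_false]
        exact ⟨hmem.1, hsplit⟩
      · intro c'' hc''
        have hinit : Fin.init c'' = c := huniq _ (ivl_subset_init hp0 hpadd c'' hc'')
        have hc''eq : c'' = Fin.snoc c (c'' (Fin.last k)) := by
          rw [← hinit, Fin.snoc_init_self]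
        rcases hlast : c'' (Fin.last k) with _ | _
        · rw [hc''eq, hlast]
        · exfalso
          rw [hc''eq, hlast] at hc''
          have hc2 : t ∈ Set.Ico (addr p (k+1) (Fin.snoc c true))
              (addr p (k+1) (Fin.snoc c true) + p (k+1) (Fin.snoc c true)) := hc''
          rw [addr_snoc_true] at hc2
          exact absurd hc2.1 (not_le.2 hsplit)
    · refine ⟨Fin.snoc c true, ?_, ?_⟩
      · show t ∈ Set.Ico (addr p (k+1) (Fin.snoc c true))
            (addr p (k+1) (Fin.snoc c true) + p (k+1) (Fin.snoc c true))
        rw [addr_snoc_true]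
        refine ⟨not_lt.1 hsplit, ?_⟩
        have := hmem.2
        linarith
      · intro c'' hc''
        have hinit : Fin.init c'' = c := huniq _ (ivl_subset_init hp0 hpadd c'' hc'')
        have hc''eq : c'' = Fin.snoc c (c'' (Fin.last k)) := by
          rw [← hinit, Fin.snoc_init_self]
        rcases hlast : c'' (Fin.last k) with _ | _
        · exfalso
          rw [hc''eq, hlast] at hc''
          have hc2 : t ∈ Set.Ico (addr p (k+1) (Fin.snoc c false))
              (addr p (k+1) (Fin.snoc c false) + p (k+1) (Fin.snoc c false)) := hc''
          rw [addr_snoc_false] at hc2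
          exact absurd hc2.2 hsplit
        · rw [hc''eq, hlast]

include hp0 hp1 hpadd in
lemma ivl_subset_Ico01 (k : ℕ) (c : Fin k → Bool) : ivl p k c ⊆ Set.Ico (0:ℝ) 1 := by
  induction k with
  | zero =>
    intro t ht
    simpa [ivl, addr, hp1] using ht
  | succ k ih =>
    exact fun t ht => ih (Fin.init c) (ivl_subset_init hp0 hpadd c ht)

include hp0 hpadd in
lemma ivl_subset_trunc : ∀ (k l : ℕ) (h : l ≤ k) (c : Fin k → Bool),
    ivl p k c ⊆ ivl p l (fun j : Fin l => c (Fin.castLE h j)) := by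
  intro k
  induction k with
  | zero =>
    intro l h c
    have hl0 : l = 0 := Nat.le_zero.1 h
    subst hl0
    have : (fun j : Fin 0 => c (Fin.castLE h j)) = c := funext fun j => j.elim0
    rw [this]
  | succ k ih =>
    intro l h c
    rcases Nat.lt_or_ge l (k+1) with hl | hl
    · have hlk : l ≤ k := Nat.lt_succ_iff.1 hl
      have step := ivl_subset_init hp0 hpadd c
      have tail := ih l hlk (Fin.init c)
      have : (fun j : Fin l => Fin.init c (Fin.castLE hlk j))
          = fun j : Fin l => c (Fin.castLE h j) := by
        funext j
        show c (Fin.castSucc (Fin.castLE hlk j)) = c (Fin.castLE h j)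
        exact congrArg c (Fin.ext rfl)
      rw [this] at tail
      exact step.trans tail
    · have hlk : l = k + 1 := le_antisymm h hl
      subst hlk
      have : (fun j : Fin (k+1) => c (Fin.castLE h j)) = c := by
        funext j; exact congrArg c (Fin.ext rfl)
      rw [this]

end PFamily

section GMap

variable (p : ∀ k, (Fin k → Bool) → ℝ)

/-- The coding map sending `t ∈ [0,1)` to the point of `Omega` whose configurations
are determined by the nested intervals containing `t`. -/
noncomputable def gmap : ℝ → Omega := fun t i =>
  if (∃ (k : ℕ) (c : Fin (k+1) → Bool),
      enz k = i ∧ t ∈ ivl p (k+1) c ∧ c (Fin.last k) = true) then true else false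

lemma gmap_cond_eq (i : ℤ) :
    {t : ℝ | ∃ (k : ℕ) (c : Fin (k+1) → Bool),
      enz k = i ∧ t ∈ ivl p (k+1) c ∧ c (Fin.last k) = true}
    = ⋃ (k : ℕ) (c : Fin (k+1) → Bool) (_ : enz k = i ∧ c (Fin.last k) = true),
        ivl p (k+1) c := by
  ext t
  simp only [Set.mem_iUnion, Set.mem_setOf_eq]
  constructor
  · rintro ⟨k, c, h1, h2, h3⟩; exact ⟨k, c, ⟨h1, h3⟩, h2⟩
  · rintro ⟨k, c, ⟨h1, h3⟩, h2⟩; exact ⟨k, c, h1, h2, h3⟩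

lemma measurable_gmap : Measurable (gmap p) := by
  refine measurable_pi_lambda _ fun i => ?_
  have hset : MeasurableSet {t : ℝ | ∃ (k : ℕ) (c : Fin (k+1) → Bool),
      enz k = i ∧ t ∈ ivl p (k+1) c ∧ c (Fin.last k) = true} := by
    rw [gmap_cond_eq]
    refine MeasurableSet.iUnion fun k => MeasurableSet.iUnion fun c =>
      MeasurableSet.iUnion fun _ => measurableSet_Ico
  exact Measurable.ite hset measurable_const measurable_const

variable {p}
variable (hp0 : ∀ k c, 0 ≤ p k c)
    (hp1 : ∀ c : Fin 0 → Bool, p 0 c = 1)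
    (hpadd : ∀ k (c : Fin k → Bool), p k c = p (k+1) (Fin.snoc c false) + p (k+1) (Fin.snoc c true))

include hp0 hp1 hpadd in
lemma proj_gmap {t : ℝ} (ht : t ∈ Set.Ico (0:ℝ) 1) {k : ℕ} {c : Fin k → Bool}
    (hmem : t ∈ ivl p k c) : proj k (gmap p t) = c := by
  funext j
  have hjk : (j : ℕ) + 1 ≤ k := j.isLt
  have htr : t ∈ ivl p ((j:ℕ)+1) (fun jj => c (Fin.castLE hjk jj)) :=
    ivl_subset_trunc hp0 hpadd k ((j:ℕ)+1) hjk c hmem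
  have hlast : (fun jj => c (Fin.castLE hjk jj)) (Fin.last (j:ℕ)) = c j := by
    exact congrArg c (Fin.ext rfl)
  have huniq := existsUnique_ivl hp0 hp1 hpadd ((j:ℕ)+1) ht
  show gmap p t (enz (j:ℕ)) = c j
  rcases hcj : c j with _ | _
  · -- c j = false : show the defining condition fails
    rw [gmap, if_neg]
    rintro ⟨k', c'', h1, h2, h3⟩
    have hk' : k' = (j : ℕ) := enz.injective h1
    subst hk'
    have : c'' = fun jj => c (Fin.castLE hjk jj) :=
      huniq.unique h2 htr
    rw [this, hlast, hcj] at h3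
    exact Bool.false_ne_true h3
  · rw [gmap, if_pos]
    exact ⟨(j : ℕ), fun jj => c (Fin.castLE hjk jj), rfl, htr, hlast.trans hcj⟩

include hp0 hp1 hpadd in
lemma gmap_preimage_bcyl (k : ℕ) (c : Fin k → Bool) :
    gmap p ⁻¹' (bcyl k c) ∩ Set.Ico (0:ℝ) 1 = ivl p k c := by
  ext t
  constructor
  · rintro ⟨hpre, ht⟩
    obtain ⟨c', hc', -⟩ := existsUnique_ivl hp0 hp1 hpadd k ht
    have : proj k (gmap p t) = c' := proj_gmap hp0 hp1 hpadd ht hc'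
    have hc : c' = c := by
      rw [← this]
      exact hpre
    rwa [← hc]
  · intro hmem
    have ht : t ∈ Set.Ico (0:ℝ) 1 := ivl_subset_Ico01 hp0 hp1 hpadd k c hmem
    exact ⟨proj_gmap hp0 hp1 hpadd ht hmem, ht⟩

include hp0 hp1 hpadd in
lemma exists_measure_of_p :
    ∃ μ : Measure Omega, IsProbabilityMeasure μ ∧
      ∀ k (c : Fin k → Bool), μ (bcyl k c) = ENNReal.ofReal (p k c) := by
  have hprob : IsProbabilityMeasure ((volume : Measure ℝ).restrict (Set.Ico (0:ℝ) 1)) := by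
    constructor
    rw [Measure.restrict_apply MeasurableSet.univ, Set.univ_inter, Real.volume_Ico]
    norm_num
  refine ⟨Measure.map (gmap p) ((volume : Measure ℝ).restrict (Set.Ico (0:ℝ) 1)),
    Measure.isProbabilityMeasure_map (measurable_gmap p).aemeasurable, fun k c => ?_⟩
  rw [Measure.map_apply (measurable_gmap p) (measurableSet_bcyl k c),
    Measure.restrict_apply (measurable_gmap p (measurableSet_bcyl k c)),
    gmap_preimage_bcyl hp0 hp1 hpadd k c, ivl, Real.volume_Ico]
  congr 1
  ring

end GMap

/-! ### Empirical frequencies along an orbit -/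

noncomputable def freq (y : Omega) (n : ℕ) (A : Set Omega) : ℝ :=
  ((Finset.range n).filter (fun i => shift^[i] y ∈ A)).card / n

lemma freq_nonneg (y : Omega) (n : ℕ) (A : Set Omega) : 0 ≤ freq y n A := by
  unfold freq; positivity

lemma freq_le_one (y : Omega) (n : ℕ) (A : Set Omega) : freq y n A ≤ 1 := by
  unfold freq
  rcases Nat.eq_zero_or_pos n with h | h
  · simp [h]
  · rw [div_le_one (by exact_mod_cast h)]
    exact_mod_cast le_trans (Finset.card_filter_le _ _) (le_of_eq (Finset.card_range n))

lemma freq_union (y : Omega) (n : ℕ) {A B C : Set Omega} (hC : C = A ∪ B)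
    (hd : Disjoint A B) : freq y n C = freq y n A + freq y n B := by
  unfold freq
  rw [← add_div]
  congr 1
  subst hC
  have hsplit : (@Finset.filter ℕ (fun i => shift^[i] y ∈ A ∪ B)
        (fun a => Classical.propDecidable _) (Finset.range n))
      = ((Finset.range n).filter (fun i => shift^[i] y ∈ A)) ∪
        ((Finset.range n).filter (fun i => shift^[i] y ∈ B)) := by
    ext i
    simp only [Finset.mem_filter, Finset.mem_union, Set.mem_union]
    tauto
  have hdisj : Disjoint ((Finset.range n).filter (fun i => shift^[i] y ∈ A))
      ((Finset.range n).filter (fun i => shift^[i] y ∈ B)) := by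
    rw [Finset.disjoint_left]
    intro i hi hi'
    rw [Finset.mem_filter] at hi hi'
    exact Set.disjoint_left.1 hd hi.2 hi'.2
  have hcards := congrArg Finset.card hsplit
  rw [Finset.card_union_of_disjoint hdisj] at hcards
  exact_mod_cast hcards

lemma freq_eq_one (y : Omega) {n : ℕ} (hn : 1 ≤ n) {A : Set Omega}
    (hA : ∀ i, shift^[i] y ∈ A) : freq y n A = 1 := by
  unfold freq
  rw [Finset.filter_true_of_mem fun i _ => hA i, Finset.card_range, div_self]
  exact_mod_cast Nat.one_le_iff_ne_zero.mp hn

lemma freq_eq_sum (y : Omega) (n : ℕ) (K : ℕ) (S : Set (Fin K → Bool)) :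
    freq y n ((proj K) ⁻¹' S)
      = ∑ c ∈ Finset.univ.filter (· ∈ S), freq y n (bcyl K c) := by
  unfold freq
  rw [← Finset.sum_div]
  congr 1
  have := Finset.card_eq_sum_card_fiberwise
    (s := (Finset.range n).filter (fun i => shift^[i] y ∈ (proj K) ⁻¹' S))
    (t := Finset.univ.filter (· ∈ S))
    (f := fun i => proj K (shift^[i] y)) ?_
  · rw [this]
    push_cast
    refine Finset.sum_congr rfl fun c hc => ?_
    refine congrArg Nat.cast (congrArg Finset.card ?_)
    ext i
    simp only [Finset.mem_filter, Finset.mem_range, Set.mem_preimage, bcyl,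
      Set.mem_singleton_iff]
    rw [Finset.mem_filter] at hc
    constructor
    · rintro ⟨⟨h1, _⟩, h3⟩; exact ⟨h1, h3⟩
    · rintro ⟨h1, h2⟩
      refine ⟨⟨h1, ?_⟩, h2⟩
      show proj K (shift^[i] y) ∈ S
      rw [h2]
      exact hc.2
  · intro i hi
    simp only [Finset.coe_filter, Finset.mem_univ, true_and, Set.mem_setOf_eq] at hi ⊢
    exact hi.2

lemma bcyl_split (k : ℕ) (c : Fin k → Bool) :
    bcyl k c = bcyl (k+1) (Fin.snoc c false) ∪ bcyl (k+1) (Fin.snoc c true) := by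
  ext x
  simp only [bcyl, Set.mem_preimage, Set.mem_union, Set.mem_singleton_iff]
  constructor
  · intro h
    rcases hb : x (enz k) with _ | _
    · left; rw [proj_succ, h, hb]
    · right; rw [proj_succ, h, hb]
  · intro h
    rcases h with h | h
    · rw [← init_proj_succ, h, Fin.init_snoc]
    · rw [← init_proj_succ, h, Fin.init_snoc]

lemma freq_bcyl_split (y : Omega) (n : ℕ) (k : ℕ) (c : Fin k → Bool) :
    freq y n (bcyl k c) = freq y n (bcyl (k+1) (Fin.snoc c false))
      + freq y n (bcyl (k+1) (Fin.snoc c true)) :=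
  freq_union y n (bcyl_split k c) (bcyl_disjoint (by
    intro h
    have := congrFun h (Fin.last k)
    simp [Fin.snoc_last] at this))

lemma bcyl_zero (c : Fin 0 → Bool) : bcyl 0 c = Set.univ := by
  ext x
  simp only [bcyl, Set.mem_preimage, Set.mem_singleton_iff, Set.mem_univ, iff_true]
  exact Subsingleton.elim _ _

/-- counting bound for the shifted set -/
lemma freq_shift_diff (y : Omega) {n : ℕ} (hn : 1 ≤ n) (A : Set Omega) :
    |freq y n (shift ⁻¹' A) - freq y n A| ≤ 2 / n := by
  have hnR : (0:ℝ) < n := by exact_mod_cast hn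
  set T : ℕ → Prop := fun m => shift^[m] y ∈ A with hT
  have hpre : ∀ i : ℕ, (shift^[i] y ∈ shift ⁻¹' A) ↔ T (i+1) := by
    intro i
    rw [Set.mem_preimage, hT, ← Function.iterate_succ_apply' shift i y]
  have hc1 : ((Finset.range n).filter (fun i => shift^[i] y ∈ shift ⁻¹' A))
      = (Finset.range n).filter (fun i => T (i+1)) := by
    apply Finset.filter_congr
    intro i _
    simp only [hpre i, eq_iff_iff]
  set c1 := ((Finset.range n).filter (fun i => T (i+1))).card with hc1d
  set c2 := ((Finset.range n).filter T).card with hc2d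
  have key1 : c1 ≤ c2 + 1 := by
    have hmap : (((Finset.range n).filter (fun i => T (i+1))).image Nat.succ)
        ⊆ (Finset.range (n+1)).filter T := by
      intro m hm
      rw [Finset.mem_image] at hm
      obtain ⟨i, hi, rfl⟩ := hm
      rw [Finset.mem_filter, Finset.mem_range] at hi ⊢
      exact ⟨by omega, hi.2⟩
    have hcard : c1 = (((Finset.range n).filter (fun i => T (i+1))).image Nat.succ).card :=
      (Finset.card_image_of_injective _ Nat.succ_injective).symm
    have h2 : ((Finset.range (n+1)).filter T).card ≤ c2 + 1 := by
      rw [Finset.range_add_one, Finset.filter_insert]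
      by_cases h : T n
      · rw [if_pos h]
        exact le_trans (Finset.card_insert_le _ _) (by omega)
      · rw [if_neg h]; omega
    calc c1 = _ := hcard
      _ ≤ ((Finset.range (n+1)).filter T).card := Finset.card_le_card hmap
      _ ≤ c2 + 1 := h2
  have key2 : c2 ≤ c1 + 1 := by
    have hsub : (Finset.range n).filter T
        ⊆ insert 0 (((Finset.range n).filter (fun i => T (i+1))).image Nat.succ) := by
      intro m hm
      rw [Finset.mem_filter, Finset.mem_range] at hm
      match m, hm with
      | 0, _ => exact Finset.mem_insert_self _ _
      | (i+1), hm =>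
        refine Finset.mem_insert_of_mem ?_
        rw [Finset.mem_image]
        exact ⟨i, Finset.mem_filter.2 ⟨Finset.mem_range.2 (by omega), hm.2⟩, rfl⟩
    calc c2 ≤ _ := Finset.card_le_card hsub
      _ ≤ (((Finset.range n).filter (fun i => T (i+1))).image Nat.succ).card + 1 :=
        Finset.card_insert_le _ _
      _ ≤ c1 + 1 := by
        rw [Finset.card_image_of_injective _ Nat.succ_injective]
  have habs : |(c1 : ℝ) - (c2 : ℝ)| ≤ 2 := by
    rw [abs_le]
    constructor
    · have : (c2 : ℝ) ≤ (c1 : ℝ) + 1 := by exact_mod_cast key2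
      linarith
    · have : (c1 : ℝ) ≤ (c2 : ℝ) + 1 := by exact_mod_cast key1
      linarith
  unfold freq
  rw [hc1, ← hc1d, ← hc2d, div_sub_div_same, abs_div, abs_of_pos hnR, div_le_div_iff₀ hnR hnR]
  calc |(c1:ℝ) - c2| * n ≤ 2 * n := by
        apply mul_le_mul_of_nonneg_right habs (le_of_lt hnR)
    _ = 2 * n := rfl

lemma freq_ones (y : Omega) (n : ℕ) :
    freq y n {x : Omega | x 0 = true} = (ones (fun i : Fin n => y ((i:ℕ):ℤ)) : ℝ) / n := by
  unfold freq
  congr 1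
  have hcards : ((Finset.range n).filter
      (fun i => shift^[i] y ∈ {x : Omega | x 0 = true})).card
      = ones (fun i : Fin n => y ((i:ℕ):ℤ)) := by
    rw [Finset.card_filter, ones_eq_sum,
      Fin.sum_univ_eq_sum_range (fun i : ℕ => if y ((i:ℤ)) = true then 1 else 0) n]
    refine Finset.sum_congr rfl fun i _ => ?_
    refine if_congr ?_ rfl rfl
    rw [Set.mem_setOf_eq, shift_iterate_apply, zero_add]
  exact_mod_cast hcards

/-! ### Existence of a maximizing invariant measure -/

lemma exists_max_point (X : Set Omega) (hne : X.Nonempty) (n : ℕ) :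
    ∃ x ∈ X, ones (fun i : Fin n => x ((i:ℕ):ℤ)) = maxOnes X n := by
  obtain ⟨x0, hx0⟩ := hne
  have hW0 : (fun i : Fin n => x0 ((i:ℕ):ℤ)) ∈ lang X n := ⟨x0, hx0, fun i => rfl⟩
  have hne' : (Finset.univ.filter fun W : Fin n → Bool => W ∈ lang X n).Nonempty :=
    ⟨_, Finset.mem_filter.2 ⟨Finset.mem_univ _, hW0⟩⟩
  obtain ⟨W, hWmem, hWsup⟩ := Finset.exists_mem_eq_sup _ hne' ones
  rw [Finset.mem_filter] at hWmem
  obtain ⟨x, hxX, hxW⟩ := hWmem.2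
  refine ⟨x, hxX, ?_⟩
  have hxWe : (fun i : Fin n => x ((i:ℕ):ℤ)) = W := funext fun i => hxW i
  rw [hxWe]
  exact hWsup.symm

lemma exists_good_measure (X : Set Omega) (hcl : IsClosed X) (hne : X.Nonempty)
    (hinv : shift '' X = X) :
    ∃ μ : Measure Omega, IsProbabilityMeasure μ ∧ μ X = 1 ∧ Measure.map shift μ = μ ∧
      (μ {x : Omega | x 0 = true}).toReal = Dtop X := by
  classical
  have hex : ∀ n : ℕ, ∃ x, x ∈ X ∧ ones (fun i : Fin n => x ((i:ℕ):ℤ)) = maxOnes X n := by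
    intro n
    obtain ⟨x, h1, h2⟩ := exists_max_point X hne n
    exact ⟨x, h1, h2⟩
  choose xx hxX hxmax using hex
  -- compactness extraction of a subsequence along which all cylinder frequencies converge
  let G : ℕ → ((Σ k : ℕ, Fin k → Bool) → Set.Icc (0:ℝ) 1) := fun n kc =>
    ⟨freq (xx n) n (bcyl kc.1 kc.2), freq_nonneg _ _ _, freq_le_one _ _ _⟩
  obtain ⟨L, φ, hφ, hGlim⟩ := CompactSpace.tendsto_subseq G
  set p : ∀ k, (Fin k → Bool) → ℝ := fun k c => (L ⟨k, c⟩ : ℝ) with hpdef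
  have hφge : ∀ j, j ≤ φ j := fun j => hφ.le_apply
  have hplim : ∀ k (c : Fin k → Bool),
      Tendsto (fun j => freq (xx (φ j)) (φ j) (bcyl k c)) atTop (nhds (p k c)) := by
    intro k c
    have h1 : Tendsto (fun j => (G ∘ φ) j ⟨k, c⟩) atTop (nhds (L ⟨k, c⟩)) :=
      (tendsto_pi_nhds.1 hGlim) ⟨k, c⟩
    exact ((continuous_subtype_val.tendsto (L ⟨k, c⟩)).comp h1)
  have hp0 : ∀ k (c : Fin k → Bool), 0 ≤ p k c := fun k c => (L ⟨k, c⟩).2.1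
  have hp1 : ∀ c : Fin 0 → Bool, p 0 c = 1 := by
    intro c
    have hev : ∀ᶠ j in atTop, freq (xx (φ j)) (φ j) (bcyl 0 c) = 1 := by
      filter_upwards [eventually_ge_atTop 1] with j hj
      rw [bcyl_zero]
      exact freq_eq_one _ (le_trans hj (hφge j)) (fun i => Set.mem_univ _)
    exact tendsto_nhds_unique ((hplim 0 c).congr' hev) tendsto_const_nhds
  have hpadd : ∀ k (c : Fin k → Bool),
      p k c = p (k+1) (Fin.snoc c false) + p (k+1) (Fin.snoc c true) := by
    intro k c
    have hsum := (hplim (k+1) (Fin.snoc c false)).add (hplim (k+1) (Fin.snoc c true))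
    refine tendsto_nhds_unique (hplim k c) (hsum.congr fun j => ?_)
    exact (freq_bcyl_split (xx (φ j)) (φ j) k c).symm
  -- the limit measure
  obtain ⟨μ, hμprob, hμbcyl⟩ := exists_measure_of_p hp0 hp1 hpadd
  haveI := hμprob
  -- values and limits on coordinate-determined sets
  have hμS : ∀ (K : ℕ) (S : Set (Fin K → Bool)),
      (μ ((proj K) ⁻¹' S)).toReal = ∑ c ∈ Finset.univ.filter (· ∈ S), p K c := by
    intro K S
    have hdecomp : (proj K) ⁻¹' S = ⋃ c ∈ Finset.univ.filter (· ∈ S), bcyl K c := by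
      ext x
      simp only [Set.mem_preimage, Set.mem_iUnion, Finset.mem_filter, Finset.mem_univ, true_and]
      constructor
      · intro h
        exact ⟨proj K x, h, rfl⟩
      · rintro ⟨c, hc, hx⟩
        have : proj K x = c := hx
        rw [this]
        exact hc
    rw [hdecomp, measure_biUnion_finset ?_ (fun c _ => measurableSet_bcyl K c)]
    · rw [ENNReal.toReal_sum (fun c _ => by rw [hμbcyl]; exact ENNReal.ofReal_ne_top)]
      refine Finset.sum_congr rfl fun c _ => ?_
      rw [hμbcyl, ENNReal.toReal_ofReal (hp0 K c)]
    · intro c _ c' _ hcc'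
      exact bcyl_disjoint hcc'
  have hμlim : ∀ (K : ℕ) (S : Set (Fin K → Bool)),
      Tendsto (fun j => freq (xx (φ j)) (φ j) ((proj K) ⁻¹' S)) atTop
        (nhds ((μ ((proj K) ⁻¹' S)).toReal)) := by
    intro K S
    rw [hμS K S]
    have hrw : ∀ j, freq (xx (φ j)) (φ j) ((proj K) ⁻¹' S)
        = ∑ c ∈ Finset.univ.filter (· ∈ S), freq (xx (φ j)) (φ j) (bcyl K c) :=
      fun j => freq_eq_sum (xx (φ j)) (φ j) K S
    refine Tendsto.congr (fun j => (hrw j).symm) ?_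
    exact tendsto_finset_sum _ fun c _ => hplim K c
  -- the generating pi-system of basic cylinders
  have hCgen : (inferInstance : MeasurableSpace Omega)
      = MeasurableSpace.generateFrom {A : Set Omega | ∃ k c, A = bcyl k c} := by
    apply le_antisymm
    · refine (iSup_le fun i => ?_ : (MeasurableSpace.pi : MeasurableSpace Omega) ≤ _)
      refine measurable_iff_comap_le.1 ?_
      refine @measurable_to_countable' Bool Omega _ ?_
        (MeasurableSpace.generateFrom {A : Set Omega | ∃ k c, A = bcyl k c})
        (fun x : Omega => x i) ?_
      · infer_instance
      intro b
      have hrep : ((fun x : Omega => x i) ⁻¹' {b})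
          = ⋃ c ∈ Finset.univ.filter (fun c : Fin (enz.symm i + 1) → Bool =>
              c ⟨enz.symm i, Nat.lt_succ_self _⟩ = b), bcyl (enz.symm i + 1) c := by
        ext x
        simp only [Set.mem_preimage, Set.mem_singleton_iff, Set.mem_iUnion,
          Finset.mem_filter, Finset.mem_univ, true_and]
        constructor
        · intro h
          refine ⟨proj (enz.symm i + 1) x, ?_, rfl⟩
          show x (enz (enz.symm i)) = b
          rw [enz.apply_symm_apply]
          exact h
        · rintro ⟨c, hc, hx⟩
          have hx' : proj (enz.symm i + 1) x = c := hx
          have := congrFun hx' ⟨enz.symm i, Nat.lt_succ_self _⟩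
          have h2 : x (enz (enz.symm i)) = c ⟨enz.symm i, Nat.lt_succ_self _⟩ := this
          rw [enz.apply_symm_apply] at h2
          rw [h2]
          exact hc
      rw [hrep]
      refine Finset.measurableSet_biUnion _ fun c _ =>
        MeasurableSpace.measurableSet_generateFrom ⟨_, _, rfl⟩
    · rw [MeasurableSpace.generateFrom_le_iff]
      rintro A ⟨k, c, rfl⟩
      exact measurableSet_bcyl k c
  have hpisys : IsPiSystem {A : Set Omega | ∃ k c, A = bcyl k c} := by
    have key : ∀ (k k' : ℕ) (c : Fin k → Bool) (c' : Fin k' → Bool), k ≤ k' →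
        (bcyl k c ∩ bcyl k' c').Nonempty → bcyl k c ∩ bcyl k' c' = bcyl k' c' := by
      rintro k k' c c' hkk' ⟨x, hx1, hx2⟩
      have h1 : proj k x = c := hx1
      have h2 : proj k' x = c' := hx2
      have hc : c = fun j : Fin k => c' (Fin.castLE hkk' j) := by
        funext j
        rw [← h1, ← h2]
        rfl
      apply Set.inter_eq_self_of_subset_right
      intro y hy
      show proj k y = c
      have hy' : proj k' y = c' := hy
      rw [hc]
      funext j
      show y (enz ((j:ℕ))) = c' (Fin.castLE hkk' j)
      rw [← hy']
      rfl
    rintro A ⟨k, c, rfl⟩ B ⟨k', c', rfl⟩ hAB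
    rcases le_total k k' with h | h
    · rw [key k k' c c' h hAB]
      exact ⟨k', c', rfl⟩
    · rw [Set.inter_comm] at hAB ⊢
      rw [key k' k c' c h hAB]
      exact ⟨k, c, rfl⟩
  -- invariance
  have hmap : Measure.map shift μ = μ := by
    haveI hmapprob : IsProbabilityMeasure (Measure.map shift μ) :=
      Measure.isProbabilityMeasure_map measurable_shift.aemeasurable
    refine MeasureTheory.ext_of_generate_finite _ hCgen hpisys ?_ (by simp)
    rintro A ⟨k, c, rfl⟩
    rw [Measure.map_apply measurable_shift (measurableSet_bcyl k c)]
    -- the shifted cylinder is coordinate-determined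
    have hlt : ∀ j : Fin k, enz.symm (enz (j:ℕ) + 1)
        < (Finset.univ.sup fun j : Fin k => enz.symm (enz (j:ℕ) + 1)) + 1 :=
      fun j => Nat.lt_succ_of_le (Finset.le_sup
        (f := fun j : Fin k => enz.symm (enz (j:ℕ) + 1)) (Finset.mem_univ j))
    set K := (Finset.univ.sup fun j : Fin k => enz.symm (enz (j:ℕ) + 1)) + 1 with hK
    have hKS : shift ⁻¹' (bcyl k c)
        = (proj K) ⁻¹' {c' | ∀ j : Fin k, c' ⟨enz.symm (enz (j:ℕ) + 1), hlt j⟩ = c j} := by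
      ext x
      simp only [Set.mem_preimage, Set.mem_setOf_eq]
      constructor
      · intro h j
        have h' : proj k (shift x) = c := h
        have hj := congrFun h' j
        show x (enz (enz.symm (enz (j:ℕ) + 1))) = c j
        rw [enz.apply_symm_apply]
        exact hj
      · intro h
        show proj k (shift x) = c
        funext j
        have hj := h j
        have hj' : x (enz (enz.symm (enz (j:ℕ) + 1))) = c j := hj
        rw [enz.apply_symm_apply] at hj'
        exact hj'
    have hl0 : Tendsto (fun j => freq (xx (φ j)) (φ j) (bcyl k c)) atTop
        (nhds ((μ (bcyl k c)).toReal)) := hμlim k {c}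
    have hEdiff : Tendsto (fun j => freq (xx (φ j)) (φ j) (shift ⁻¹' (bcyl k c))
        - freq (xx (φ j)) (φ j) (bcyl k c)) atTop (nhds 0) := by
      refine squeeze_zero_norm' ?_
        ((tendsto_const_div_atTop_nhds_zero_nat 2).comp hφ.tendsto_atTop)
      filter_upwards [eventually_ge_atTop 1] with j hj
      exact freq_shift_diff (xx (φ j)) (le_trans hj (hφge j)) (bcyl k c)
    have hl2 : Tendsto (fun j => freq (xx (φ j)) (φ j) (shift ⁻¹' (bcyl k c))) atTop
        (nhds ((μ (bcyl k c)).toReal)) := by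
      have hsum := hEdiff.add hl0
      rw [zero_add] at hsum
      exact hsum.congr fun j => by ring
    have hl1 : Tendsto (fun j => freq (xx (φ j)) (φ j) (shift ⁻¹' (bcyl k c))) atTop
        (nhds ((μ (shift ⁻¹' (bcyl k c))).toReal)) := by
      rw [hKS]
      exact hμlim K _
    have htr : (μ (shift ⁻¹' (bcyl k c))).toReal = (μ (bcyl k c)).toReal :=
      tendsto_nhds_unique hl1 hl2
    exact (ENNReal.toReal_eq_toReal_iff' (measure_ne_top μ _) (measure_ne_top μ _)).1 htr
  -- full measure on X
  have hXfull : μ X = 1 := by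
    have hAmeas : ∀ k : ℕ, MeasurableSet ((proj k) ⁻¹' (proj k '' X)) :=
      fun k => measurable_proj k (measurableSet_words _)
    have hA1 : ∀ k : ℕ, μ ((proj k) ⁻¹' (proj k '' X)) = 1 := by
      intro k
      have hev : ∀ᶠ j in atTop, freq (xx (φ j)) (φ j) ((proj k) ⁻¹' (proj k '' X)) = 1 := by
        filter_upwards [eventually_ge_atTop 1] with j hj
        apply freq_eq_one _ (le_trans hj (hφge j))
        intro i
        exact Set.mem_image_of_mem _ (mem_iterate_image hinv i (hxX (φ j)))
      have h1 : (μ ((proj k) ⁻¹' (proj k '' X))).toReal = 1 :=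
        tendsto_nhds_unique ((hμlim k _).congr' hev) tendsto_const_nhds
      exact (ENNReal.toReal_eq_one_iff _).1 h1
    have hInter : (⋂ k : ℕ, (proj k) ⁻¹' (proj k '' X)) ⊆ X := by
      intro x hx
      rw [Set.mem_iInter] at hx
      have hw : ∀ k : ℕ, ∃ y, y ∈ X ∧ proj k y = proj k x := by
        intro k
        obtain ⟨y, hyX, hyp⟩ := hx k
        exact ⟨y, hyX, hyp⟩
      choose y hy1 hy2 using hw
      have hconv : Tendsto y atTop (nhds x) := by
        rw [tendsto_pi_nhds]
        intro i
        have hev : ∀ᶠ k in atTop, y k i = x i := by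
          filter_upwards [eventually_ge_atTop (enz.symm i + 1)] with k hk
          have hlt : enz.symm i < k := hk
          have h3 : y k (enz (enz.symm i)) = x (enz (enz.symm i)) :=
            congrFun (hy2 k) (⟨enz.symm i, hlt⟩ : Fin k)
          rwa [enz.apply_symm_apply] at h3
        exact tendsto_const_nhds.congr' (by filter_upwards [hev] with k hk; exact hk.symm)
      have hclm : x ∈ closure X := mem_closure_of_tendsto hconv (Eventually.of_forall hy1)
      rwa [hcl.closure_eq] at hclm
    have hIfull : μ (⋂ k : ℕ, (proj k) ⁻¹' (proj k '' X)) = 1 := by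
      rw [← prob_compl_eq_zero_iff (MeasurableSet.iInter fun k => hAmeas k), Set.compl_iInter]
      refine measure_iUnion_null fun k => ?_
      rw [measure_compl (hAmeas k) (measure_ne_top μ _), hA1 k, measure_univ, tsub_self]
    exact le_antisymm prob_le_one (hIfull ▸ measure_mono hInter)
  -- the value on the cylinder [1]
  have hval : (μ {x : Omega | x 0 = true}).toReal = Dtop X := by
    have hrep : {x : Omega | x 0 = true}
        = (proj (enz.symm 0 + 1)) ⁻¹'
          {c : Fin (enz.symm 0 + 1) → Bool | c ⟨enz.symm 0, Nat.lt_succ_self _⟩ = true} := by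
      ext x
      simp only [Set.mem_setOf_eq, Set.mem_preimage]
      have : proj (enz.symm 0 + 1) x ⟨enz.symm 0, Nat.lt_succ_self _⟩
          = x (enz (enz.symm 0)) := rfl
      rw [this, enz.apply_symm_apply]
    have hE1 : ∀ n, 1 ≤ n →
        freq (xx n) n {x : Omega | x 0 = true} = (maxOnes X n : ℝ) / n := by
      intro n _
      rw [freq_ones (xx n) n, hxmax n]
    have hlim1 : Tendsto (fun j => freq (xx (φ j)) (φ j) {x : Omega | x 0 = true}) atTop
        (nhds ((μ {x : Omega | x 0 = true}).toReal)) := by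
      rw [hrep]
      exact hμlim _ _
    have hlim2 : Tendsto (fun j => freq (xx (φ j)) (φ j) {x : Omega | x 0 = true}) atTop
        (nhds (Dtop X)) := by
      have hcomp := (tendsto_maxOnes X hinv).comp hφ.tendsto_atTop
      refine hcomp.congr' ?_
      filter_upwards [eventually_ge_atTop 1] with j hj
      exact (hE1 (φ j) (le_trans hj (hφge j))).symm
    exact tendsto_nhds_unique hlim1 hlim2
  exact ⟨μ, hμprob, hXfull, hmap, hval⟩

/-- for every ergodic invariant `ν` on a subshift `X`:
`d_ν ≤ D_ν ≤ D = d` (here `Dnu` and `Dtop` are indeed the limits of the corresponding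
sequences, as asserted by the two `Tendsto` clauses), and consequently the variational
principle `D = sup_{ν ∈ M(X,S)} D_ν` holds. -/
theorem stmt4 (X : Set Omega) (hcl : IsClosed X) (hne : X.Nonempty)
    (hinv : shift '' X = X)
    (ν : Measure Omega) [IsProbabilityMeasure ν] (hsupp : ν X = 1)
    (herg : Ergodic shift ν) :
    Tendsto (fun n : ℕ => (maxOnes X n : ℝ) / n) atTop (nhds (Dtop X)) ∧
    Tendsto (fun n : ℕ => (maxOnesPos X ν n : ℝ) / n) atTop (nhds (Dnu X ν)) ∧
    (ν {x | x 0 = true}).toReal ≤ Dnu X ν ∧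
    Dnu X ν ≤ Dtop X ∧
    Dtop X = dsup X ∧
    Dtop X = ⨆ μ : {μ : Measure Omega //
        IsProbabilityMeasure μ ∧ μ X = 1 ∧ Measure.map shift μ = μ},
      Dnu X (μ : Measure Omega) := by
  have hXm : MeasurableSet X := hcl.measurableSet
  have hm : Measure.map shift ν = ν := herg.toMeasurePreserving.map_eq
  obtain ⟨μs, hP, hXfull, hminv, hval⟩ := exists_good_measure X hcl hne hinv
  haveI := hP
  haveI : Nonempty {μ : Measure Omega //
      IsProbabilityMeasure μ ∧ μ X = 1 ∧ Measure.map shift μ = μ} :=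
    ⟨⟨μs, hP, hXfull, hminv⟩⟩
  have hDnuTop : ∀ μ' : {μ : Measure Omega //
      IsProbabilityMeasure μ ∧ μ X = 1 ∧ Measure.map shift μ = μ},
      Dnu X (μ' : Measure Omega) ≤ Dtop X := fun μ' => Dnu_le_Dtop X μ'.1
  have hdle : ∀ μ' : {μ : Measure Omega //
      IsProbabilityMeasure μ ∧ μ X = 1 ∧ Measure.map shift μ = μ},
      ((μ' : Measure Omega) {x | x 0 = true}).toReal ≤ Dnu X (μ' : Measure Omega) := by
    intro μ'
    haveI := μ'.2.1
    exact d_le_Dnu X hXm μ'.2.2.2 μ'.2.2.1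
  have hble : ∀ μ' : {μ : Measure Omega //
      IsProbabilityMeasure μ ∧ μ X = 1 ∧ Measure.map shift μ = μ},
      ((μ' : Measure Omega) {x | x 0 = true}).toReal ≤ 1 := by
    intro μ'
    haveI := μ'.2.1
    calc ((μ' : Measure Omega) {x | x 0 = true}).toReal
        ≤ (1 : ℝ≥0∞).toReal := ENNReal.toReal_mono ENNReal.one_ne_top prob_le_one
      _ = 1 := by simp
  refine ⟨tendsto_maxOnes X hinv, tendsto_maxOnesPos X hinv hm,
    d_le_Dnu X hXm hm hsupp, Dnu_le_Dtop X ν, ?_, ?_⟩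
  · -- Dtop = dsup
    show Dtop X = ⨆ μ' : {μ : Measure Omega //
        IsProbabilityMeasure μ ∧ μ X = 1 ∧ Measure.map shift μ = μ},
      ((μ' : Measure Omega) {x | x 0 = true}).toReal
    apply le_antisymm
    · rw [← hval]
      exact le_ciSup (f := fun μ' : {μ : Measure Omega //
          IsProbabilityMeasure μ ∧ μ X = 1 ∧ Measure.map shift μ = μ} =>
          ((μ' : Measure Omega) {x | x 0 = true}).toReal)
        ⟨1, by rintro y ⟨μ', rfl⟩; exact hble μ'⟩ ⟨μs, hP, hXfull, hminv⟩
    · exact ciSup_le fun μ' => le_trans (hdle μ') (hDnuTop μ')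
  · apply le_antisymm
    · calc Dtop X = (μs {x | x 0 = true}).toReal := hval.symm
        _ ≤ Dnu X μs := d_le_Dnu X hXm hminv hXfull
        _ ≤ _ := le_ciSup (f := fun μ' : {μ : Measure Omega //
              IsProbabilityMeasure μ ∧ μ X = 1 ∧ Measure.map shift μ = μ} =>
              Dnu X (μ' : Measure Omega))
            ⟨Dtop X, by rintro y ⟨μ', rfl⟩; exact hDnuTop μ'⟩ ⟨μs, hP, hXfull, hminv⟩
    · exact ciSup_le fun μ' => hDnuTop μ'
end

section
/- Let X ⊆ {0,1}^ℤ be a subshift and X̃ its hereditary closure. Then d(X,S) = d(X̃,S), i.e., sup over invariant measures of the measure of [1] is the same for X and X̃. -/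
open MeasureTheory Filter Real
open scoped ENNReal

attribute [local instance] Classical.propDecidable

/-- The hereditary closure of `X`. -/
def her (X : Set Omega) : Set Omega := {z | ∃ x ∈ X, ∀ i, z i ≤ x i}

namespace S7

/-- cylinder over a finite set of coordinates -/
def cylF (F : Finset ℤ) (w : ℤ → Bool) : Set Omega := {x | ∀ i ∈ F, x i = w i}

/-- cylinders together with the empty set -/
def IsCylE (s : Set Omega) : Prop := s = ∅ ∨ ∃ F w, s = cylF F w

lemma measurable_shift : Measurable shift := by
  apply measurable_pi_lambda
  exact fun n => measurable_pi_apply (n + 1)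

lemma cylF_measurableSet (F : Finset ℤ) (w : ℤ → Bool) : MeasurableSet (cylF F w) := by
  have : cylF F w = ⋂ i ∈ F, (fun x : Omega => x i) ⁻¹' {w i} := by
    ext x; simp [cylF]
  rw [this]
  exact MeasurableSet.biInter (F.countable_toSet) fun i _ =>
    (measurable_pi_apply i) (measurableSet_singleton _)

lemma IsCylE.measurableSet {s : Set Omega} (h : IsCylE s) : MeasurableSet s := by
  rcases h with rfl | ⟨F, w, rfl⟩
  · exact MeasurableSet.empty
  · exact cylF_measurableSet F w

lemma cylF_isOpen (F : Finset ℤ) (w : ℤ → Bool) : IsOpen (cylF F w) := by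
  have : cylF F w = ⋂ i ∈ F, (fun x : Omega => x i) ⁻¹' {w i} := by
    ext x; simp [cylF]
  rw [this]
  exact isOpen_biInter_finset fun i _ => (continuous_apply i).isOpen_preimage _ (isOpen_discrete _)

lemma cylF_isClosed (F : Finset ℤ) (w : ℤ → Bool) : IsClosed (cylF F w) := by
  have : cylF F w = ⋂ i ∈ F, (fun x : Omega => x i) ⁻¹' {w i} := by
    ext x; simp [cylF]
  rw [this]
  exact isClosed_biInter fun i _ => (IsClosed.preimage (continuous_apply i) (isClosed_discrete _))

lemma cylF_isCompact (F : Finset ℤ) (w : ℤ → Bool) : IsCompact (cylF F w) :=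
  (cylF_isClosed F w).isCompact

lemma IsCylE.isOpen {s : Set Omega} (h : IsCylE s) : IsOpen s := by
  rcases h with rfl | ⟨F, w, rfl⟩
  · exact isOpen_empty
  · exact cylF_isOpen F w

lemma cylF_congr {F : Finset ℤ} {w v : ℤ → Bool} (h : ∀ i ∈ F, w i = v i) :
    cylF F w = cylF F v := by
  ext x; constructor <;> intro hx i hi
  · rw [hx i hi, h i hi]
  · rw [hx i hi, ← h i hi]

lemma univ_isCylE : IsCylE (Set.univ : Set Omega) := by
  right
  exact ⟨∅, fun _ => false, by ext x; simp [cylF]⟩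

/-- intersection of two cylinders is a cylinder or empty -/
lemma isPiSystem_cylE : IsPiSystem {s : Set Omega | IsCylE s} := by
  rintro s (rfl | ⟨F, w, rfl⟩) t ht hne
  · simp only [Set.empty_inter]; exact Or.inl rfl
  rcases ht with rfl | ⟨G, v, rfl⟩
  · simp only [Set.inter_empty]; exact Or.inl rfl
  right
  refine ⟨F ∪ G, fun i => if i ∈ F then w i else v i, ?_⟩
  obtain ⟨x, hxF, hxG⟩ := hne
  have hagree : ∀ i ∈ F, i ∈ G → w i = v i := fun i hiF hiG => by
    rw [← hxF i hiF, hxG i hiG]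
  ext z
  constructor
  · rintro ⟨hzF, hzG⟩
    intro i hi
    by_cases hiF : i ∈ F
    · simp [hiF, hzF i hiF]
    · have hiG : i ∈ G := by
        rcases Finset.mem_union.1 hi with h | h
        · exact absurd h hiF
        · exact h
      simp [hiF, hzG i hiG]
  · intro hz
    constructor
    · intro i hi
      have := hz i (Finset.mem_union_left _ hi)
      simpa [hi] using this
    · intro i hi
      have := hz i (Finset.mem_union_right _ hi)
      by_cases hiF : i ∈ F
      · rw [this]; simp only [if_pos hiF]; exact hagree i hiF hi
      · rw [this]; simp only [if_neg hiF]

/-- the product σ-algebra is generated by the cylinders -/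
lemma generateFrom_cylE :
    (inferInstance : MeasurableSpace Omega) = MeasurableSpace.generateFrom {s | IsCylE s} := by
  apply le_antisymm
  · -- pi ≤ generateFrom
    rw [show (inferInstance : MeasurableSpace Omega) = MeasurableSpace.pi from rfl]
    refine iSup_le fun i => ?_
    rw [MeasurableSpace.comap_le_iff_le_map]
    intro A _
    -- A : Set Bool; show eval i ⁻¹' A measurable in generateFrom
    have : (fun x : Omega => x i) ⁻¹' A =
        (⋃ b ∈ A, cylF {i} (fun _ => b)) := by
      ext x
      simp only [Set.mem_preimage, Set.mem_iUnion, cylF, Finset.mem_singleton,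
        Set.mem_setOf_eq]
      constructor
      · intro h; exact ⟨x i, h, fun j hj => by rw [hj]⟩
      · rintro ⟨b, hb, h⟩; rw [h i rfl]; exact hb
    rw [MeasurableSpace.map_def, Set.preimage] at *
    show MeasurableSet[MeasurableSpace.generateFrom {s | IsCylE s}] {x | x i ∈ A}
    have h2 : {x : Omega | x i ∈ A} = ⋃ b ∈ A, cylF {i} (fun _ => b) := this
    rw [h2]
    exact MeasurableSet.biUnion (Set.to_countable _) fun b _ =>
      MeasurableSpace.measurableSet_generateFrom (Or.inr ⟨{i}, fun _ => b, rfl⟩)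
  · exact MeasurableSpace.generateFrom_le fun s hs => hs.measurableSet

/-- every point of an open set has a cylinder neighborhood inside it -/
lemma exists_cylF_subset {U : Set Omega} (hU : IsOpen U) {x : Omega} (hx : x ∈ U) :
    ∃ F : Finset ℤ, x ∈ cylF F x ∧ cylF F x ⊆ U := by
  have hU' : U ∈ nhds x := hU.mem_nhds hx
  rw [nhds_pi, Filter.mem_pi] at hU'
  obtain ⟨I, hIfin, t, ht, hsub⟩ := hU'
  refine ⟨hIfin.toFinset, fun i _ => rfl, ?_⟩
  intro z hz
  apply hsub
  intro i hi
  have : z i = x i := hz i (hIfin.mem_toFinset.2 hi)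
  rw [this]
  exact mem_of_mem_nhds (ht i)

end S7
namespace S7
open Topology

lemma shift_iterate (k : ℕ) (x : Omega) (i : ℤ) : (shift^[k] x) i = x (i + k) := by
  induction k generalizing x i with
  | zero => simp
  | succ k ih =>
    rw [Function.iterate_succ_apply, ih (shift x) i]
    show x (i + k + 1) = x (i + (k + 1 : ℕ))
    congr 1
    push_cast
    ring

noncomputable section
variable (y : ℕ → Omega)

/-- empirical measure along the first `n+1` shifts of `y n` -/
def E (n : ℕ) : Measure Omega :=
  ((n : ℝ≥0∞) + 1)⁻¹ • ∑ k ∈ Finset.range (n + 1), Measure.dirac (shift^[k] (y n))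

lemma E_apply (n : ℕ) (s : Set Omega) :
    E y n s = ((n : ℝ≥0∞) + 1)⁻¹ *
      ∑ k ∈ Finset.range (n + 1), Measure.dirac (shift^[k] (y n)) s := by
  rw [E, Measure.smul_apply, Measure.finset_sum_apply, smul_eq_mul]

lemma nat_succ_ne_zero' (n : ℕ) : ((n : ℝ≥0∞) + 1) ≠ 0 := by simp

lemma nat_succ_ne_top (n : ℕ) : ((n : ℝ≥0∞) + 1) ≠ ⊤ := by
  simp [ENNReal.add_ne_top]

lemma E_univ (n : ℕ) : E y n Set.univ = 1 := by
  rw [E_apply]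
  simp only [measure_univ, Finset.sum_const, Finset.card_range, nsmul_eq_mul, mul_one]
  rw [show ((n + 1 : ℕ) : ℝ≥0∞) = (n : ℝ≥0∞) + 1 by push_cast; ring]
  exact ENNReal.inv_mul_cancel (nat_succ_ne_zero' n) (nat_succ_ne_top n)

/-- the fixed nonprincipal ultrafilter -/
def UF : Ultrafilter ℕ := Filter.hyperfilter ℕ

/-- the content: ultrafilter limit of the empirical measures -/
def LL (s : Set Omega) : ℝ≥0∞ := (Ultrafilter.map (fun n => E y n s) UF).lim

lemma tendsto_LL (s : Set Omega) :
    Tendsto (fun n => E y n s) (UF : Filter ℕ) (𝓝 (LL y s)) := by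
  have := Ultrafilter.le_nhds_lim (Ultrafilter.map (fun n => E y n s) UF)
  rwa [Ultrafilter.coe_map] at this

lemma LL_unique {s : Set Omega} {a : ℝ≥0∞}
    (h : Tendsto (fun n => E y n s) (UF : Filter ℕ) (𝓝 a)) : LL y s = a :=
  tendsto_nhds_unique (tendsto_LL y s) h

lemma LL_empty : LL y ∅ = 0 :=
  LL_unique y (by simp only [measure_empty]; exact tendsto_const_nhds)

lemma LL_univ : LL y Set.univ = 1 :=
  LL_unique y (by simp only [E_univ]; exact tendsto_const_nhds)

lemma LL_mono {s t : Set Omega} (h : s ⊆ t) : LL y s ≤ LL y t :=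
  le_of_tendsto_of_tendsto' (tendsto_LL y s) (tendsto_LL y t) fun n => measure_mono h

lemma LL_le_one (s : Set Omega) : LL y s ≤ 1 := by
  have := LL_mono y (Set.subset_univ s)
  rwa [LL_univ] at this

lemma LL_biUnion_le {ι : Type*} (A : Finset ι) (f : ι → Set Omega) :
    LL y (⋃ i ∈ A, f i) ≤ ∑ i ∈ A, LL y (f i) := by
  refine le_of_tendsto_of_tendsto' (tendsto_LL y _)
    (tendsto_finset_sum A fun i _ => tendsto_LL y (f i)) fun n => ?_
  apply measure_biUnion_finset_le

lemma LL_inter_add_diff (t : Set Omega) {s : Set Omega} (hs : MeasurableSet s) :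
    LL y (t ∩ s) + LL y (t \ s) = LL y t := by
  have h1 : Tendsto (fun n => E y n (t ∩ s) + E y n (t \ s)) (UF : Filter ℕ)
      (𝓝 (LL y (t ∩ s) + LL y (t \ s))) := (tendsto_LL y _).add (tendsto_LL y _)
  have h2 : (fun n => E y n (t ∩ s) + E y n (t \ s)) = fun n => E y n t := by
    funext n; exact measure_inter_add_diff t hs
  rw [h2] at h1
  exact (LL_unique y h1).symm

/-- the set function on cylinders, `⊤` elsewhere -/
def mfun : Set Omega → ℝ≥0∞ := fun s => if IsCylE s then LL y s else ⊤

lemma mfun_of_cylE {s : Set Omega} (h : IsCylE s) : mfun y s = LL y s := if_pos h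

lemma mfun_of_not_cylE {s : Set Omega} (h : ¬ IsCylE s) : mfun y s = ⊤ := if_neg h

lemma mfun_empty : mfun y ∅ = 0 := by
  rw [mfun_of_cylE y (Or.inl rfl), LL_empty]

/-- the induced outer measure -/
def om : OuterMeasure Omega := OuterMeasure.ofFunction (mfun y) (mfun_empty y)

lemma om_cylE {s : Set Omega} (hs : IsCylE s) : om y s = LL y s := by
  refine le_antisymm (le_trans (OuterMeasure.ofFunction_le s)
    (le_of_eq (mfun_of_cylE y hs))) ?_
  rw [om, OuterMeasure.ofFunction_apply]
  refine le_iInf fun t => le_iInf fun hcov => ?_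
  by_cases hall : ∀ i, IsCylE (t i)
  · rcases hs with rfl | ⟨F, w, rfl⟩
    · rw [LL_empty]; exact zero_le
    · obtain ⟨b, hb⟩ := (cylF_isCompact F w).elim_finite_subcover t
        (fun i => (hall i).isOpen) hcov
      calc LL y (cylF F w) ≤ LL y (⋃ i ∈ b, t i) := LL_mono y hb
        _ ≤ ∑ i ∈ b, LL y (t i) := LL_biUnion_le y b t
        _ = ∑ i ∈ b, mfun y (t i) :=
            Finset.sum_congr rfl fun i _ => (mfun_of_cylE y (hall i)).symm
        _ ≤ ∑' i, mfun y (t i) := ENNReal.sum_le_tsum b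
  · push_neg at hall
    obtain ⟨i, hi⟩ := hall
    have htop : mfun y (t i) = ⊤ := mfun_of_not_cylE y hi
    have h2 : (⊤ : ℝ≥0∞) ≤ ∑' j, mfun y (t j) := htop ▸ ENNReal.le_tsum i
    exact le_trans le_top h2

lemma IsCylE_inter {s t : Set Omega} (hs : IsCylE s) (ht : IsCylE t) : IsCylE (s ∩ t) := by
  by_cases hne : (s ∩ t).Nonempty
  · exact isPiSystem_cylE s hs t ht hne
  · left
    exact Set.not_nonempty_iff_eq_empty.1 hne

lemma compl_coord (i : ℤ) (b : Bool) :
    (cylF {i} fun _ => b)ᶜ = cylF {i} (fun _ => !b) := by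
  ext x
  simp only [Set.mem_compl_iff, cylF, Set.mem_setOf_eq, Finset.mem_singleton, forall_eq]
  cases b <;> cases hx : x i <;> simp [hx]

lemma coord_caratheodory (i : ℤ) (b : Bool) :
    MeasurableSet[(om y).caratheodory] (cylF {i} fun _ => b) := by
  apply MeasureTheory.OuterMeasure.ofFunction_caratheodory
  intro t
  by_cases ht : IsCylE t
  · have hcyl : IsCylE (cylF {i} fun _ => b) := Or.inr ⟨_, _, rfl⟩
    have h1 : IsCylE (t ∩ cylF {i} fun _ => b) := IsCylE_inter ht hcyl
    have h2 : IsCylE (t \ cylF {i} fun _ => b) := by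
      rw [Set.diff_eq, compl_coord]
      exact IsCylE_inter ht (Or.inr ⟨_, _, rfl⟩)
    rw [mfun_of_cylE y ht, mfun_of_cylE y h1, mfun_of_cylE y h2]
    exact le_of_eq (LL_inter_add_diff y t (cylF_measurableSet _ _))
  · rw [mfun_of_not_cylE y ht]
    exact le_top

lemma cylF_eq_iInter (F : Finset ℤ) (w : ℤ → Bool) :
    cylF F w = ⋂ i ∈ F, cylF {i} (fun _ => w i) := by
  ext x
  simp only [cylF, Set.mem_setOf_eq, Set.mem_iInter, Finset.mem_singleton]
  constructor
  · intro h i hi j hj; rw [hj]; exact h i hi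
  · intro h i hi; exact h i hi i rfl

lemma pi_le_caratheodory :
    (inferInstance : MeasurableSpace Omega) ≤ (om y).caratheodory := by
  rw [generateFrom_cylE]
  refine MeasurableSpace.generateFrom_le fun s hs => ?_
  rcases hs with rfl | ⟨F, w, rfl⟩
  · exact @MeasurableSet.empty _ (om y).caratheodory
  · rw [cylF_eq_iInter]
    exact MeasurableSet.biInter F.countable_toSet fun i _ => coord_caratheodory y i (w i)

/-- the invariant measure -/
def mu : Measure Omega := (om y).toMeasure (pi_le_caratheodory y)

lemma mu_apply {s : Set Omega} (hs : MeasurableSet s) : mu y s = om y s :=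
  MeasureTheory.toMeasure_apply _ _ hs

lemma mu_cylE {s : Set Omega} (hs : IsCylE s) : mu y s = LL y s := by
  rw [mu_apply y hs.measurableSet, om_cylE y hs]

instance mu_prob : IsProbabilityMeasure (mu y) := by
  constructor
  rw [mu_cylE y univ_isCylE, LL_univ]

end
end S7
namespace S7
open Topology
noncomputable section
variable (y : ℕ → Omega)

lemma sum_shift_le (d : ℕ → ℝ≥0∞) (n : ℕ) :
    (∑ k ∈ Finset.range (n + 1), d (k + 1)) ≤ (∑ k ∈ Finset.range (n + 1), d k) + d (n + 1) ∧
    (∑ k ∈ Finset.range (n + 1), d k) ≤ (∑ k ∈ Finset.range (n + 1), d (k + 1)) + d 0 := by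
  have hA : ∑ k ∈ Finset.range (n + 2), d k
      = (∑ k ∈ Finset.range (n + 1), d k) + d (n + 1) := Finset.sum_range_succ d (n + 1)
  have hB : ∑ k ∈ Finset.range (n + 2), d k
      = (∑ k ∈ Finset.range (n + 1), d (k + 1)) + d 0 := Finset.sum_range_succ' d (n + 1)
  constructor
  · calc (∑ k ∈ Finset.range (n + 1), d (k + 1))
        ≤ (∑ k ∈ Finset.range (n + 1), d (k + 1)) + d 0 := le_self_add
      _ = ∑ k ∈ Finset.range (n + 2), d k := hB.symm
      _ = _ := hA
  · calc (∑ k ∈ Finset.range (n + 1), d k)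
        ≤ (∑ k ∈ Finset.range (n + 1), d k) + d (n + 1) := le_self_add
      _ = ∑ k ∈ Finset.range (n + 2), d k := hA.symm
      _ = _ := hB

lemma dirac_le_one (a : Omega) (s : Set Omega) : Measure.dirac a s ≤ 1 := by
  have : Measure.dirac a s ≤ Measure.dirac a Set.univ := measure_mono (Set.subset_univ s)
  simpa using this

lemma E_shift_bounds {s : Set Omega} (hs : MeasurableSet s) (n : ℕ) :
    E y n (shift ⁻¹' s) ≤ E y n s + ((n : ℝ≥0∞) + 1)⁻¹ ∧
    E y n s ≤ E y n (shift ⁻¹' s) + ((n : ℝ≥0∞) + 1)⁻¹ := by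
  set d : ℕ → ℝ≥0∞ := fun k => Measure.dirac (shift^[k] (y n)) s with hd
  have hdirac : ∀ k, Measure.dirac (shift^[k] (y n)) (shift ⁻¹' s) = d (k + 1) := by
    intro k
    show _ = Measure.dirac (shift^[k+1] (y n)) s
    rw [Measure.dirac_apply' _ (measurable_shift hs), Measure.dirac_apply' _ hs]
    simp only [Set.indicator_apply, Set.mem_preimage]
    rw [← Function.iterate_succ_apply' shift k (y n)]
    simp [Pi.one_apply]
  have hEs : E y n s = ((n : ℝ≥0∞) + 1)⁻¹ * ∑ k ∈ Finset.range (n + 1), d k := E_apply y n s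
  have hEps : E y n (shift ⁻¹' s)
      = ((n : ℝ≥0∞) + 1)⁻¹ * ∑ k ∈ Finset.range (n + 1), d (k + 1) := by
    rw [E_apply]
    congr 1
    exact Finset.sum_congr rfl fun k _ => hdirac k
  obtain ⟨h1, h2⟩ := sum_shift_le d n
  have hinv : ∀ m : ℕ, ((n : ℝ≥0∞) + 1)⁻¹ * d m ≤ ((n : ℝ≥0∞) + 1)⁻¹ := by
    intro m
    calc ((n : ℝ≥0∞) + 1)⁻¹ * d m ≤ ((n : ℝ≥0∞) + 1)⁻¹ * 1 :=
          mul_le_mul_right (dirac_le_one _ _) _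
      _ = _ := mul_one _
  constructor
  · rw [hEps, hEs]
    calc ((n : ℝ≥0∞) + 1)⁻¹ * ∑ k ∈ Finset.range (n + 1), d (k + 1)
        ≤ ((n : ℝ≥0∞) + 1)⁻¹ * ((∑ k ∈ Finset.range (n + 1), d k) + d (n + 1)) :=
          mul_le_mul_right h1 _
      _ = ((n : ℝ≥0∞) + 1)⁻¹ * (∑ k ∈ Finset.range (n + 1), d k)
          + ((n : ℝ≥0∞) + 1)⁻¹ * d (n + 1) := mul_add _ _ _
      _ ≤ _ := add_le_add_right (hinv _) _
  · rw [hEps, hEs]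
    calc ((n : ℝ≥0∞) + 1)⁻¹ * ∑ k ∈ Finset.range (n + 1), d k
        ≤ ((n : ℝ≥0∞) + 1)⁻¹ * ((∑ k ∈ Finset.range (n + 1), d (k + 1)) + d 0) :=
          mul_le_mul_right h2 _
      _ = ((n : ℝ≥0∞) + 1)⁻¹ * (∑ k ∈ Finset.range (n + 1), d (k + 1))
          + ((n : ℝ≥0∞) + 1)⁻¹ * d 0 := mul_add _ _ _
      _ ≤ _ := add_le_add_right (hinv _) _

lemma tendsto_eps : Tendsto (fun n : ℕ => ((n : ℝ≥0∞) + 1)⁻¹) (UF : Filter ℕ) (𝓝 0) := by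
  have h1 : Tendsto (fun n : ℕ => ((n : ℝ≥0∞) + 1)⁻¹) atTop (𝓝 0) := by
    have h2 : Tendsto (fun n : ℕ => n + 1) atTop atTop := tendsto_add_atTop_nat 1
    have h3 := ENNReal.tendsto_inv_nat_nhds_zero.comp h2
    refine h3.congr fun n => ?_
    simp only [Function.comp_apply]
    push_cast
    ring_nf
  refine h1.mono_left ?_
  calc (UF : Filter ℕ) ≤ cofinite := Filter.hyperfilter_le_cofinite
    _ = atTop := Nat.cofinite_eq_atTop

lemma LL_shift {s : Set Omega} (hs : MeasurableSet s) : LL y (shift ⁻¹' s) = LL y s := by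
  have hts : Tendsto (fun n => E y n s + ((n : ℝ≥0∞) + 1)⁻¹) (UF : Filter ℕ)
      (𝓝 (LL y s)) := by
    have := (tendsto_LL y s).add (tendsto_eps)
    simpa using this
  have htp : Tendsto (fun n => E y n (shift ⁻¹' s) + ((n : ℝ≥0∞) + 1)⁻¹) (UF : Filter ℕ)
      (𝓝 (LL y (shift ⁻¹' s))) := by
    have := (tendsto_LL y (shift ⁻¹' s)).add (tendsto_eps)
    simpa using this
  refine le_antisymm ?_ ?_
  · exact le_of_tendsto_of_tendsto' (tendsto_LL y _) hts fun n => (E_shift_bounds y hs n).1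
  · exact le_of_tendsto_of_tendsto' (tendsto_LL y _) htp fun n => (E_shift_bounds y hs n).2

lemma shift_preimage_cylE {s : Set Omega} (hs : IsCylE s) : IsCylE (shift ⁻¹' s) := by
  rcases hs with rfl | ⟨F, w, rfl⟩
  · left; rfl
  · right
    refine ⟨F.image (· + 1), fun j => w (j - 1), ?_⟩
    ext x
    simp only [Set.mem_preimage, cylF, Set.mem_setOf_eq, Finset.mem_image]
    constructor
    · rintro h j ⟨i, hi, rfl⟩
      have := h i hi
      simpa [shift] using this
    · intro h i hi
      have := h (i + 1) ⟨i, hi, rfl⟩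
      simpa [shift] using this

lemma mu_shift_invariant : Measure.map shift (mu y) = mu y := by
  have hmeas := measurable_shift
  have : IsProbabilityMeasure (Measure.map shift (mu y)) :=
    Measure.isProbabilityMeasure_map hmeas.aemeasurable
  refine ext_of_generate_finite {s | IsCylE s} generateFrom_cylE isPiSystem_cylE ?_ ?_
  · intro s hs
    rw [Measure.map_apply hmeas hs.measurableSet,
      mu_apply y (hmeas hs.measurableSet), mu_cylE y hs]
    rw [show om y (shift ⁻¹' s) = LL y (shift ⁻¹' s) from om_cylE y (shift_preimage_cylE hs)]
    exact LL_shift y hs.measurableSet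
  · rw [measure_univ, measure_univ]

/-- countable index for cylinders -/
def J : Type := Σ F : Finset ℤ, (F → Bool)

instance : Countable J := by
  unfold J; infer_instance

def embed (p : J) : Set Omega :=
  cylF p.1 (fun i => if h : i ∈ p.1 then p.2 ⟨i, h⟩ else false)

lemma embed_eq (F : Finset ℤ) (w : ℤ → Bool) :
    cylF F w = embed ⟨F, fun i => w i.1⟩ := by
  apply cylF_congr
  intro i hi
  simp [hi]

lemma isOpen_eq_biUnion {U : Set Omega} (hU : IsOpen U) :
    U = ⋃ p ∈ {p : J | embed p ⊆ U}, embed p := by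
  apply Set.Subset.antisymm
  · intro x hx
    obtain ⟨F, hmem, hsub⟩ := exists_cylF_subset hU hx
    have h1 : (⟨F, fun i => x i.1⟩ : J) ∈ {p : J | embed p ⊆ U} := by
      show embed _ ⊆ U
      rw [← embed_eq]; exact hsub
    have h2 : x ∈ embed (⟨F, fun i => x i.1⟩ : J) := by
      rw [← embed_eq]; exact hmem
    exact Set.mem_biUnion h1 h2
  · exact Set.iUnion₂_subset fun p hp => hp

lemma LL_null_of_subset_compl {X : Set Omega} (hy : ∀ n k, shift^[k] (y n) ∈ X)
    {C : Set Omega} (hCyl : IsCylE C) (hC : C ⊆ Xᶜ) : LL y C = 0 := by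
  refine LL_unique y ?_
  have hz : ∀ n, E y n C = 0 := by
    intro n
    rw [E_apply]
    have : ∀ k ∈ Finset.range (n + 1), Measure.dirac (shift^[k] (y n)) C = 0 := by
      intro k _
      rw [Measure.dirac_apply' _ hCyl.measurableSet]
      have : shift^[k] (y n) ∉ C := fun hmem => (hC hmem) (hy n k)
      simp [Set.indicator_apply, this]
    rw [Finset.sum_eq_zero this, mul_zero]
  simp only [hz]
  exact tendsto_const_nhds

lemma mu_of_closed {X : Set Omega} (hcl : IsClosed X) (hy : ∀ n k, shift^[k] (y n) ∈ X) :
    MeasurableSet X ∧ mu y X = 1 := by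
  have hU : IsOpen Xᶜ := hcl.isOpen_compl
  have hrep := isOpen_eq_biUnion (U := Xᶜ) hU
  have hmeasC : MeasurableSet Xᶜ := by
    rw [hrep]
    exact MeasurableSet.biUnion (Set.to_countable _) fun p _ =>
      (cylF_measurableSet _ _)
  have hmeasX : MeasurableSet X := by
    have := hmeasC.compl
    rwa [compl_compl] at this
  refine ⟨hmeasX, ?_⟩
  have hnull : mu y Xᶜ = 0 := by
    rw [hrep]
    rw [measure_biUnion_null_iff (Set.to_countable _)]
    intro p hp
    rw [show mu y (embed p) = LL y (embed p) from mu_cylE y (Or.inr ⟨_, _, rfl⟩)]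
    exact LL_null_of_subset_compl y hy (Or.inr ⟨_, _, rfl⟩) hp
  exact (prob_compl_eq_zero_iff hmeasX).1 hnull

lemma one_cyl : {x : Omega | x 0 = true} = cylF {0} (fun _ => true) := by
  ext x
  simp [cylF]

lemma E_one (n : ℕ) :
    E y n {x : Omega | x 0 = true}
      = ((n : ℝ≥0∞) + 1)⁻¹ *
        ∑ k ∈ Finset.range (n + 1), (if y n (k : ℤ) = true then (1 : ℝ≥0∞) else 0) := by
  rw [E_apply]
  congr 1
  refine Finset.sum_congr rfl fun k _ => ?_
  rw [one_cyl, Measure.dirac_apply' _ (cylF_measurableSet _ _)]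
  have hmem : shift^[k] (y n) ∈ cylF {0} (fun _ => true) ↔ y n (k : ℤ) = true := by
    simp [cylF, shift_iterate]
  by_cases h : y n (k : ℤ) = true
  · rw [if_pos h]
    rw [Set.indicator_of_mem (hmem.2 h)]
    rfl
  · rw [if_neg h]
    exact Set.indicator_of_notMem (fun hm => h (hmem.1 hm)) _

end
end S7
namespace S7
open Topology

lemma mem_her_self {X : Set Omega} {x : Omega} (hx : x ∈ X) : x ∈ her X :=
  ⟨x, hx, fun _ => le_refl _⟩

lemma ones_mono {n : ℕ} {W V : Fin n → Bool} (h : ∀ i, W i ≤ V i) : ones W ≤ ones V := by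
  apply Finset.card_le_card
  intro i hi
  simp only [Finset.mem_filter, Finset.mem_univ, true_and] at hi ⊢
  have h2 := h i
  rw [hi] at h2
  exact Bool.eq_true_of_true_le h2

lemma maxOnes_her_le (X : Set Omega) (n : ℕ) : maxOnes (her X) n ≤ maxOnes X n := by
  apply Finset.sup_le
  intro W hW
  simp only [Finset.mem_filter, Finset.mem_univ, true_and] at hW
  obtain ⟨z, hz, hzW⟩ := hW
  obtain ⟨x, hx, hle⟩ := hz
  have h1 : ones W ≤ ones (fun i : Fin n => x ((i : ℕ) : ℤ)) := by
    refine ones_mono fun i => ?_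
    rw [← hzW i]
    exact hle _
  refine le_trans h1 (Finset.le_sup ?_)
  simp only [Finset.mem_filter, Finset.mem_univ, true_and]
  exact ⟨x, hx, fun _ => rfl⟩

lemma sum_ones (m : ℕ) (z : Omega) :
    (∑ k ∈ Finset.range m, (if z ((k : ℕ) : ℤ) = true then (1 : ℝ≥0∞) else 0))
      = ((ones fun i : Fin m => z ((i : ℕ) : ℤ) : ℕ) : ℝ≥0∞) := by
  rw [← Fin.sum_univ_eq_sum_range (fun k => if z ((k : ℕ) : ℤ) = true then (1 : ℝ≥0∞) else 0) m]
  rw [ones, Finset.card_filter]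
  push_cast
  refine Finset.sum_congr rfl fun i _ => ?_
  by_cases h : z ((i : ℕ) : ℤ) = true <;> simp [h]

/-- coordinate sets are measurable -/
lemma measurable_coord (c : ℤ) : MeasurableSet {z : Omega | z c = true} := by
  have h : {z : Omega | z c = true} = (fun z : Omega => z c) ⁻¹' {true} := by
    ext z; simp
  rw [h]
  exact measurable_pi_apply c (measurableSet_singleton true)

/-- main upper bound for an invariant measure carried by `Y` -/
lemma nu_le (ν : Measure Omega) [IsProbabilityMeasure ν] (hinv : Measure.map shift ν = ν)
    {Y : Set Omega} (hY : ν Y = 1) {M : ℝ≥0∞} (n : ℕ)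
    (hbd : ∀ z ∈ Y,
      (∑ k ∈ Finset.range (n + 1), (if z ((k : ℕ) : ℤ) = true then (1 : ℝ≥0∞) else 0)) ≤ M) :
    ((n : ℝ≥0∞) + 1) * ν {x | x 0 = true} ≤ M := by
  have hshift : ∀ s : Set Omega, MeasurableSet s → ν (shift ⁻¹' s) = ν s := by
    intro s hs
    conv_rhs => rw [← hinv]
    rw [Measure.map_apply measurable_shift hs]
  set A : ℕ → Set Omega := fun k => {z | z ((k : ℕ) : ℤ) = true} with hA
  have hAmeas : ∀ k, MeasurableSet (A k) := fun k => measurable_coord _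
  have hAk : ∀ k, ν (A k) = ν (A 0) := by
    intro k
    induction k with
    | zero => rfl
    | succ k ih =>
      have hpre : shift ⁻¹' (A k) = A (k + 1) := by
        ext z
        simp only [hA, Set.mem_preimage, Set.mem_setOf_eq, shift]
        have hc : ((k : ℕ) : ℤ) + 1 = (((k + 1 : ℕ)) : ℤ) := by push_cast; ring
        rw [hc]
      rw [← hpre, hshift _ (hAmeas k)]
      exact ih
  set g : Omega → ℝ≥0∞ := fun z => ∑ k ∈ Finset.range (n + 1), (A k).indicator (fun _ => (1 : ℝ≥0∞)) z with hg
  have hgmeas : Measurable g :=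
    Finset.measurable_sum _ fun k _ => (measurable_const.indicator (hAmeas k))
  have hgint : ∫⁻ z, g z ∂ν = ∑ k ∈ Finset.range (n + 1), ν (A k) := by
    simp only [hg]
    rw [lintegral_finset_sum _ fun k _ => measurable_const.indicator (hAmeas k)]
    refine Finset.sum_congr rfl fun k _ => ?_
    rw [lintegral_indicator_const (hAmeas k), one_mul]
  have hsum : ∑ k ∈ Finset.range (n + 1), ν (A k) = ((n : ℝ≥0∞) + 1) * ν (A 0) := by
    rw [Finset.sum_congr rfl fun k _ => hAk k, Finset.sum_const, Finset.card_range,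
      nsmul_eq_mul]
    congr 1
    push_cast
    ring
  have hgsum : ∀ z, g z = ∑ k ∈ Finset.range (n + 1),
      (if z ((k : ℕ) : ℤ) = true then (1 : ℝ≥0∞) else 0) := by
    intro z
    refine Finset.sum_congr rfl fun k _ => ?_
    rw [Set.indicator_apply]
    by_cases h : z ((k : ℕ) : ℤ) = true <;> simp [h, hA]
  set D : Set Omega := {z | g z ≤ M} with hD
  have hDmeas : MeasurableSet D := hgmeas measurableSet_Iic
  have hYD : Y ⊆ D := fun z hz => by
    show g z ≤ M
    rw [hgsum z]
    exact hbd z hz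
  have hDone : ν D = 1 := le_antisymm prob_le_one (hY ▸ measure_mono hYD)
  have hDc : ν Dᶜ = 0 := (prob_compl_eq_zero_iff hDmeas).2 hDone
  have hbound : ∀ z, g z ≤ M + ((n : ℝ≥0∞) + 1) * Dᶜ.indicator (fun _ => (1 : ℝ≥0∞)) z := by
    intro z
    by_cases hzD : z ∈ D
    · exact le_trans hzD le_self_add
    · have h1 : Dᶜ.indicator (fun _ => (1 : ℝ≥0∞)) z = 1 := Set.indicator_of_mem (Set.mem_compl hzD) _
      rw [h1, mul_one]
      have h2 : g z ≤ (n : ℝ≥0∞) + 1 := by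
        rw [hg]
        calc ∑ k ∈ Finset.range (n + 1), (A k).indicator (fun _ => (1 : ℝ≥0∞)) z
            ≤ ∑ _k ∈ Finset.range (n + 1), (1 : ℝ≥0∞) := by
              refine Finset.sum_le_sum fun k _ => ?_
              rw [Set.indicator_apply]
              split <;> simp
          _ = (n : ℝ≥0∞) + 1 := by
              rw [Finset.sum_const, Finset.card_range, nsmul_eq_mul, mul_one]
              push_cast
              ring
      exact le_trans h2 le_add_self
  have hint : ∫⁻ z, g z ∂ν ≤ M := by
    calc ∫⁻ z, g z ∂ν ≤ ∫⁻ z, (M + ((n : ℝ≥0∞) + 1) * Dᶜ.indicator (fun _ => (1 : ℝ≥0∞)) z) ∂ν :=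
          lintegral_mono hbound
      _ = M + ((n : ℝ≥0∞) + 1) * ν Dᶜ := by
          rw [lintegral_add_left measurable_const]
          rw [lintegral_const_mul _ (measurable_const.indicator hDmeas.compl)]
          rw [lintegral_indicator_const hDmeas.compl, one_mul]
          simp [measure_univ]
      _ = M := by rw [hDc, mul_zero, add_zero]
  have h0 : A 0 = {x : Omega | x 0 = true} := by
    rw [hA]
    norm_num
  calc ((n : ℝ≥0∞) + 1) * ν {x | x 0 = true} = ((n : ℝ≥0∞) + 1) * ν (A 0) := by rw [h0]
    _ = ∑ k ∈ Finset.range (n + 1), ν (A k) := hsum.symm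
    _ = ∫⁻ z, g z ∂ν := hgint.symm
    _ ≤ M := hint

end S7
namespace S7
open Topology

lemma exists_max_point (X : Set Omega) (hne : X.Nonempty) (m : ℕ) :
    ∃ x ∈ X, (ones fun i : Fin m => x ((i : ℕ) : ℤ)) = maxOnes X m := by
  obtain ⟨x0, hx0⟩ := hne
  have hne' : (Finset.univ.filter fun W : Fin m → Bool => W ∈ lang X m).Nonempty := by
    refine ⟨fun i => x0 ((i : ℕ) : ℤ), ?_⟩
    simp only [Finset.mem_filter, Finset.mem_univ, true_and]
    exact ⟨x0, hx0, fun _ => rfl⟩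
  obtain ⟨W, hW, hWs⟩ := Finset.exists_mem_eq_sup _ hne' ones
  simp only [Finset.mem_filter, Finset.mem_univ, true_and] at hW
  obtain ⟨x, hx, hxW⟩ := hW
  refine ⟨x, hx, ?_⟩
  rw [maxOnes, hWs]
  congr 1
  funext i
  exact hxW i

end S7

theorem stmt7' (X : Set Omega) (hcl : IsClosed X) (hne : X.Nonempty)
    (hinv : shift '' X = X) :
    dsup X = dsup (her X) := by
  classical
  open S7 in
  have hex : ∀ n : ℕ, ∃ x ∈ X, (ones fun i : Fin (n + 1) => x ((i : ℕ) : ℤ))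
      = maxOnes X (n + 1) := fun n => S7.exists_max_point X hne (n + 1)
  choose y hyX hyones using hex
  have hshiftX : ∀ x ∈ X, shift x ∈ X := by
    intro x hx
    rw [← hinv]
    exact ⟨x, hx, rfl⟩
  have hiter : ∀ n k, shift^[k] (y n) ∈ X := by
    intro n k
    induction k with
    | zero => exact hyX n
    | succ k ih => rw [Function.iterate_succ_apply']; exact hshiftX _ ih
  set μ0 := S7.mu y with hμ0def
  haveI hprob : IsProbabilityMeasure μ0 := S7.mu_prob y
  obtain ⟨hXmeas, hμ0X⟩ := S7.mu_of_closed y hcl hiter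
  have hμ0inv : Measure.map shift μ0 = μ0 := S7.mu_shift_invariant y
  have hone_cylE : S7.IsCylE {x : Omega | x 0 = true} := by
    rw [S7.one_cyl]; exact Or.inr ⟨_, _, rfl⟩
  have hμ0one : μ0 {x : Omega | x 0 = true} = S7.LL y {x | x 0 = true} :=
    S7.mu_cylE y hone_cylE
  have hEone : ∀ n, S7.E y n {x : Omega | x 0 = true}
      = ((n : ℝ≥0∞) + 1)⁻¹ * ((maxOnes X (n + 1) : ℕ) : ℝ≥0∞) := by
    intro n
    rw [S7.E_one y n]
    congr 1
    rw [S7.sum_ones (n + 1) (y n), hyones n]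
  have hμ0her : μ0 (her X) = 1 := by
    refine le_antisymm prob_le_one ?_
    calc (1 : ℝ≥0∞) = μ0 X := hμ0X.symm
      _ ≤ μ0 (her X) := measure_mono fun x hx => S7.mem_her_self hx
  -- key: any invariant probability measure on `her X` has `[1]`-mass at most that of `μ0`
  have hkey : ∀ ν : Measure Omega, IsProbabilityMeasure ν → ν (her X) = 1 →
      Measure.map shift ν = ν → ν {x | x 0 = true} ≤ μ0 {x | x 0 = true} := by
    intro ν hprobν hνher hνinv
    haveI := hprobν
    rw [hμ0one]
    refine ge_of_tendsto (S7.tendsto_LL y _) (Filter.Eventually.of_forall fun n => ?_)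
    rw [hEone n]
    have hb : ∀ z ∈ her X,
        (∑ k ∈ Finset.range (n + 1), (if z ((k : ℕ) : ℤ) = true then (1 : ℝ≥0∞) else 0))
          ≤ ((maxOnes X (n + 1) : ℕ) : ℝ≥0∞) := by
      intro z hz
      rw [S7.sum_ones (n + 1) z]
      have h1 : ones (fun i : Fin (n + 1) => z ((i : ℕ) : ℤ)) ≤ maxOnes (her X) (n + 1) := by
        apply Finset.le_sup
        simp only [Finset.mem_filter, Finset.mem_univ, true_and]
        exact ⟨z, hz, fun _ => rfl⟩
      exact_mod_cast le_trans h1 (S7.maxOnes_her_le X (n + 1))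
    have h2 := S7.nu_le ν hνinv hνher n hb
    calc ν {x | x 0 = true}
        = ((n : ℝ≥0∞) + 1)⁻¹ * (((n : ℝ≥0∞) + 1) * ν {x | x 0 = true}) := by
          rw [← mul_assoc,
            ENNReal.inv_mul_cancel (S7.nat_succ_ne_zero' n) (S7.nat_succ_ne_top n), one_mul]
      _ ≤ ((n : ℝ≥0∞) + 1)⁻¹ * ((maxOnes X (n + 1) : ℕ) : ℝ≥0∞) := mul_le_mul_right h2 _
  -- boundedness of the families
  have hbdd : ∀ Z : Set Omega, BddAbove (Set.range fun μ :
      {μ : Measure Omega // IsProbabilityMeasure μ ∧ μ Z = 1 ∧ Measure.map shift μ = μ} =>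
        ((μ : Measure Omega) {x | x 0 = true}).toReal) := by
    intro Z
    refine ⟨1, ?_⟩
    rintro r ⟨μ, rfl⟩
    haveI := μ.2.1
    have h1 : (μ : Measure Omega) {x | x 0 = true} ≤ 1 := prob_le_one
    have h2 := ENNReal.toReal_mono ENNReal.one_ne_top h1
    simpa using h2
  haveI hNX : Nonempty
      {μ : Measure Omega // IsProbabilityMeasure μ ∧ μ X = 1 ∧ Measure.map shift μ = μ} :=
    ⟨⟨μ0, hprob, hμ0X, hμ0inv⟩⟩
  haveI hNH : Nonempty
      {μ : Measure Omega // IsProbabilityMeasure μ ∧ μ (her X) = 1 ∧ Measure.map shift μ = μ} :=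
    ⟨⟨μ0, hprob, hμ0her, hμ0inv⟩⟩
  apply le_antisymm
  · refine ciSup_le fun μ => ?_
    haveI := μ.2.1
    have hher : (μ : Measure Omega) (her X) = 1 := by
      refine le_antisymm prob_le_one ?_
      calc (1 : ℝ≥0∞) = (μ : Measure Omega) X := μ.2.2.1.symm
        _ ≤ (μ : Measure Omega) (her X) := measure_mono fun x hx => S7.mem_her_self hx
    exact le_ciSup_of_le (hbdd (her X)) ⟨μ.1, μ.2.1, hher, μ.2.2.2⟩ (le_refl _)
  · refine ciSup_le fun ν => ?_
    haveI := ν.2.1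
    have h := hkey ν.1 ν.2.1 ν.2.2.1 ν.2.2.2
    have hne_top : μ0 {x | x 0 = true} ≠ ⊤ :=
      (prob_le_one.trans_lt ENNReal.one_lt_top).ne
    have h' : ((ν : Measure Omega) {x | x 0 = true}).toReal
        ≤ (μ0 {x | x 0 = true}).toReal := ENNReal.toReal_mono hne_top h
    exact h'.trans (le_ciSup (hbdd X) ⟨μ0, hprob, hμ0X, hμ0inv⟩)

/-- the density of a subshift equals the density of its hereditary closure:
`d(X,S) = d(X̃,S)`. -/
theorem stmt7 (X : Set Omega) (hcl : IsClosed X) (hne : X.Nonempty)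
    (hinv : shift '' X = X) :
    dsup X = dsup (her X) := by
  exact stmt7' X hcl hne hinv
end

section
/- Let X ⊆ {0,1}^ℤ be a subshift with hereditary closure X̃, and let ν be an ergodic, non-atomic invariant measure on X that is ones-saturated (D_ν = D). If d(X,S) = h(X̃,S), then κ = ν * B_{1/2,1/2} does not have the Gibbs property on X̃: there is no constant a > 0 such that κ(C) ≥ a·2^{-|C|·h(X̃,S)} for all words C in L(X̃) with κ(C) > 0. -/
open MeasureTheory Filter Real
open scoped ENNReal

attribute [local instance] Classical.propDecidable

/-- Coordinatewise multiplication `Q(x,y)_i = x_i · y_i`. -/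
def Qmul (p : Omega × Omega) : Omega := fun i => p.1 i && p.2 i

namespace S13

/-- cylinder at arbitrary position -/
def cylAt (m : ℤ) (n : ℕ) (W : Fin n → Bool) : Set Omega :=
  {x | ∀ i : Fin n, x (m + (i : ℕ)) = W i}

lemma coord_meas (i : ℤ) (c : Bool) : MeasurableSet {x : Omega | x i = c} := by
  have h : {x : Omega | x i = c} = (fun x : Omega => x i) ⁻¹' {c} := rfl
  rw [h]
  exact measurable_pi_apply i (measurableSet_singleton c)

lemma cyl_eq_cylAt (n : ℕ) (W : Fin n → Bool) : cyl n W = cylAt 0 n W := by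
  ext x; simp [cyl, cylAt]

lemma measurableSet_cylAt (m : ℤ) (n : ℕ) (W : Fin n → Bool) :
    MeasurableSet (cylAt m n W) := by
  have h : cylAt m n W = ⋂ i : Fin n, {x : Omega | x (m + (i : ℕ)) = W i} := by
    ext x; simp [cylAt]
  rw [h]
  exact MeasurableSet.iInter fun i => coord_meas _ _

lemma measurableSet_cyl (n : ℕ) (W : Fin n → Bool) : MeasurableSet (cyl n W) := by
  rw [cyl_eq_cylAt]; exact measurableSet_cylAt _ _ _

lemma shift_measurable : Measurable shift :=
  measurable_pi_iff.2 fun i => measurable_pi_apply _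

lemma shift_iter (m : ℕ) (x : Omega) (j : ℤ) : (shift^[m] x) j = x (j + m) := by
  induction m generalizing x j with
  | zero => simp
  | succ m ih =>
    rw [Function.iterate_succ_apply, ih (shift x) j]
    show x (j + m + 1) = x (j + (m + 1 : ℕ))
    congr 1; push_cast; ring

lemma preimage_iter_cylAt (m : ℕ) (k : ℤ) (n : ℕ) (W : Fin n → Bool) :
    (shift^[m]) ⁻¹' (cylAt k n W) = cylAt (k + m) n W := by
  ext x
  simp only [Set.mem_preimage, cylAt, Set.mem_setOf_eq, shift_iter]
  refine forall_congr' fun i => ?_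
  rw [add_right_comm]

/-- words of the same length have disjoint cylinders -/
lemma cyl_disjoint {n : ℕ} {W V : Fin n → Bool} (h : W ≠ V) :
    Disjoint (cyl n W) (cyl n V) := by
  refine Set.disjoint_left.2 fun x hxW hxV => h (funext fun i => ?_)
  rw [← hxW i, ← hxV i]

lemma sum_measure_cyl (μ : Measure Omega) [IsProbabilityMeasure μ] (n : ℕ) :
    ∑ W : Fin n → Bool, μ (cyl n W) = 1 := by
  have hdisj : ((Finset.univ : Finset (Fin n → Bool)) : Set (Fin n → Bool)).PairwiseDisjoint (cyl n) :=
    fun W _ V _ hWV => cyl_disjoint hWV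
  rw [← measure_biUnion_finset hdisj (fun W _ => measurableSet_cyl n W)]
  have h : ⋃ W ∈ (Finset.univ : Finset (Fin n → Bool)), cyl n W = Set.univ := by
    refine Set.eq_univ_of_forall fun x => ?_
    exact Set.mem_biUnion (Finset.mem_univ _) (fun i => rfl : x ∈ cyl n fun i => x ((i:ℕ):ℤ))
  rw [h]; exact measure_univ

/-- positive measure words are in the language -/
lemma mem_lang_of_pos {X : Set Omega} (μ : Measure Omega) [IsProbabilityMeasure μ]
    (hX : μ X = 1) {n : ℕ} {W : Fin n → Bool} (h : μ (cyl n W) ≠ 0) : W ∈ lang X n := by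
  by_contra hW
  apply h
  have hsub : X ⊆ (cyl n W)ᶜ := by
    intro x hx hxc
    exact hW ⟨x, hx, hxc⟩
  have h1 : (1 : ℝ≥0∞) ≤ μ (cyl n W)ᶜ := hX ▸ measure_mono hsub
  have h3 : μ (cyl n W) + μ (cyl n W)ᶜ = 1 := by
    rw [measure_add_measure_compl (measurableSet_cyl n W)]; exact measure_univ
  have h4 : μ (cyl n W) + 1 ≤ 0 + 1 := by
    rw [zero_add]
    calc μ (cyl n W) + 1 ≤ μ (cyl n W) + μ (cyl n W)ᶜ := add_le_add_right h1 _
      _ = 1 := h3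
  exact le_antisymm ((ENNReal.add_le_add_iff_right ENNReal.one_ne_top).1 h4) zero_le

lemma exists_pos_word {X : Set Omega} (μ : Measure Omega) [IsProbabilityMeasure μ]
    (hX : μ X = 1) (n : ℕ) : ∃ W : Fin n → Bool, W ∈ lang X n ∧ μ (cyl n W) ≠ 0 := by
  by_contra h
  push_neg at h
  have hz : ∀ W : Fin n → Bool, μ (cyl n W) = 0 := by
    intro W
    by_contra hz
    exact hz (h W (mem_lang_of_pos μ hX hz))
  have := sum_measure_cyl μ n
  rw [Finset.sum_congr rfl (fun W _ => hz W)] at this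
  simp at this

/-- ones splits over concatenation -/
lemma ones_add {m n : ℕ} (W : Fin (m + n) → Bool) :
    ones W = ones (fun i : Fin m => W (Fin.castAdd n i))
      + ones (fun j : Fin n => W (Fin.natAdd m j)) := by
  classical
  simp only [ones, Finset.card_filter]
  exact Fin.sum_univ_add (fun i => if W i = true then 1 else 0)


section Invariance

variable {ν : Measure Omega}

/-- translation invariance of cylinder measures -/
lemma meas_cylAt_add (hσ : MeasurePreserving shift ν ν) (m : ℕ) (k : ℤ) (n : ℕ) (W : Fin n → Bool) :
    ν (cylAt (k + m) n W) = ν (cylAt k n W) := by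
  rw [← preimage_iter_cylAt m k n W]
  exact (hσ.iterate m).measure_preimage (measurableSet_cylAt _ _ _).nullMeasurableSet

lemma meas_cylAt_of_two (hσ : MeasurePreserving shift ν ν) (m : ℕ) (n : ℕ) (W : Fin n → Bool) :
    ν (cylAt m n W) = ν (cyl n W) := by
  have := meas_cylAt_add hσ m 0 n W
  rw [zero_add] at this
  rw [this, cyl_eq_cylAt]

lemma meas_cylAt_neg (hσ : MeasurePreserving shift ν ν) (m : ℕ) (n : ℕ) (W : Fin n → Bool) :
    ν (cylAt (-(m : ℤ)) n W) = ν (cyl n W) := by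
  have := meas_cylAt_add hσ m (-(m : ℤ)) n W
  rw [neg_add_cancel] at this
  rw [← this, cyl_eq_cylAt]

/-- shifts of points of X stay in X -/
lemma iter_mem {X : Set Omega} (hinv : shift '' X = X) (m : ℕ) {x : Omega} (hx : x ∈ X) :
    shift^[m] x ∈ X := by
  induction m with
  | zero => exact hx
  | succ m ih =>
    rw [Function.iterate_succ_apply']
    exact hinv ▸ Set.mem_image_of_mem shift ih

/-- subadditivity of maxOnesPos -/
lemma maxOnesPos_subadd {X : Set Omega} (hσ : MeasurePreserving shift ν ν) (hinv : shift '' X = X)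
    [IsProbabilityMeasure ν] (m n : ℕ) :
    maxOnesPos X ν (m + n) ≤ maxOnesPos X ν m + maxOnesPos X ν n := by
  refine Finset.sup_le fun W hW => ?_
  rw [Finset.mem_filter] at hW
  obtain ⟨-, ⟨x, hxX, hxW⟩, hWpos⟩ := hW
  set W1 : Fin m → Bool := fun i => W (Fin.castAdd n i) with hW1
  set W2 : Fin n → Bool := fun j => W (Fin.natAdd m j) with hW2
  have hsub1 : cyl (m + n) W ⊆ cyl m W1 := by
    intro y hy i
    have := hy (Fin.castAdd n i)
    simpa using this
  have hsub2 : cyl (m + n) W ⊆ cylAt m n W2 := by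
    intro y hy j
    show y ((m : ℤ) + (j : ℕ)) = W (Fin.natAdd m j)
    have := hy (Fin.natAdd m j)
    simp only [Fin.coe_natAdd] at this
    rw [← this]
    congr 1 <;> omega
  have h1 : ones W1 ≤ maxOnesPos X ν m := by
    refine Finset.le_sup (f := ones) ?_
    rw [Finset.mem_filter]
    refine ⟨Finset.mem_univ _, ⟨x, hxX, fun i => by simpa using hxW (Fin.castAdd n i)⟩, ?_⟩
    exact fun h0 => hWpos (measure_mono_null hsub1 h0)
  have h2 : ones W2 ≤ maxOnesPos X ν n := by
    refine Finset.le_sup (f := ones) ?_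
    rw [Finset.mem_filter]
    refine ⟨Finset.mem_univ _, ⟨shift^[m] x, iter_mem hinv m hxX, fun j => ?_⟩, ?_⟩
    · rw [shift_iter]
      show x ((j : ℕ) + (m : ℕ)) = W (Fin.natAdd m j)
      have := hxW (Fin.natAdd m j)
      simp only [Fin.coe_natAdd] at this
      rw [← this]
      congr 1 <;> omega
    · intro h0
      have : ν (cylAt m n W2) = 0 := by rw [meas_cylAt_of_two hσ]; exact h0
      exact hWpos (measure_mono_null hsub2 this)
  calc ones W = ones W1 + ones W2 := ones_add W
    _ ≤ _ := Nat.add_le_add h1 h2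

/-- Fekete: the limit is a lower bound of u n / n -/
lemma Dnu_le_ratio {X : Set Omega} (hσ : MeasurePreserving shift ν ν) (hinv : shift '' X = X) [IsProbabilityMeasure ν]
    {Dν : ℝ} (hDν : Tendsto (fun n : ℕ => (maxOnesPos X ν n : ℝ) / n) atTop (nhds Dν))
    (n : ℕ) (hn : 1 ≤ n) : Dν ≤ (maxOnesPos X ν n : ℝ) / n := by
  have hsa : Subadditive fun n => (maxOnesPos X ν n : ℝ) := by
    intro m k
    push_cast
    exact_mod_cast Nat.cast_le.2 (maxOnesPos_subadd hσ hinv m k)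
  have hbdd : BddBelow (Set.range fun k : ℕ => ((maxOnesPos X ν k : ℝ)) / k) := by
    refine ⟨0, fun r hr => ?_⟩
    obtain ⟨k, rfl⟩ := hr
    positivity
  have hlim := hsa.tendsto_lim hbdd
  have hEq : Dν = hsa.lim := tendsto_nhds_unique hDν hlim
  rw [hEq, Subadditive.lim]
  refine csInf_le (hbdd.mono ?_) ?_
  · exact Set.image_subset_range _ _
  · exact ⟨n, hn, rfl⟩

end Invariance

section Dsup

lemma coord_true_eq_biUnion (n : ℕ) (i : Fin n) :
    {x : Omega | x ((i : ℕ) : ℤ) = true} =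
      ⋃ W ∈ Finset.univ.filter (fun W : Fin n → Bool => W i = true), cyl n W := by
  ext x
  simp only [Set.mem_setOf_eq, Set.mem_iUnion, Finset.mem_filter, Finset.mem_univ, true_and]
  constructor
  · intro hx
    exact ⟨fun j => x ((j : ℕ) : ℤ), hx, fun j => rfl⟩
  · rintro ⟨W, hWi, hxW⟩
    rw [hxW i, hWi]

lemma mu_one_le_ratio (μ : Measure Omega) [IsProbabilityMeasure μ] {X : Set Omega}
    (hX : μ X = 1) (hmap : Measure.map shift μ = μ) (n : ℕ) (hn : 1 ≤ n) :
    (μ {x | x 0 = true}).toReal ≤ (maxOnes X n : ℝ) / n := by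
  have hcoord : ∀ i : ℕ, μ {x : Omega | x (i : ℤ) = true} = μ {x | x 0 = true} := by
    intro i
    induction i with
    | zero => norm_num
    | succ i ih =>
      have hpre : shift ⁻¹' {x : Omega | x (i : ℤ) = true}
          = {x : Omega | x ((i + 1 : ℕ) : ℤ) = true} := by
        ext x
        simp only [Set.mem_preimage, Set.mem_setOf_eq, shift]
        constructor <;> intro h <;> rw [← h] <;> congr 1 <;> push_cast <;> ring
      rw [← ih, ← hpre, ← Measure.map_apply shift_measurable (coord_meas _ _), hmap]
  have hsum : ∀ i : Fin n, μ {x : Omega | x ((i : ℕ) : ℤ) = true}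
      = ∑ W ∈ Finset.univ.filter (fun W : Fin n → Bool => W i = true), μ (cyl n W) := by
    intro i
    rw [coord_true_eq_biUnion n i]
    refine measure_biUnion_finset ?_ (fun W _ => measurableSet_cyl n W)
    intro W _ V _ hWV
    exact cyl_disjoint hWV
  have key : (n : ℝ≥0∞) * μ {x | x 0 = true} ≤ (maxOnes X n : ℝ≥0∞) := by
    have step1 : ∑ i : Fin n, μ {x : Omega | x ((i : ℕ) : ℤ) = true}
        = (n : ℝ≥0∞) * μ {x | x 0 = true} := by
      calc ∑ i : Fin n, μ {x : Omega | x ((i : ℕ) : ℤ) = true}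
          = ∑ _i : Fin n, μ {x : Omega | x 0 = true} :=
            Finset.sum_congr rfl fun i _ => hcoord (i : ℕ)
        _ = (n : ℝ≥0∞) * μ {x | x 0 = true} := by simp [Finset.sum_const, mul_comm]
    have step2 : ∑ i : Fin n, μ {x : Omega | x ((i : ℕ) : ℤ) = true}
        = ∑ W : Fin n → Bool, (ones W : ℝ≥0∞) * μ (cyl n W) := by
      rw [Finset.sum_congr rfl (fun i _ => hsum i)]
      rw [Finset.sum_congr rfl
        (fun i _ => Finset.sum_filter (fun W : Fin n → Bool => W i = true) (fun W => μ (cyl n W)))]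
      rw [Finset.sum_comm]
      refine Finset.sum_congr rfl fun W _ => ?_
      rw [← Finset.sum_filter (fun i : Fin n => W i = true) (fun _ => μ (cyl n W))]
      rw [Finset.sum_const, ones, nsmul_eq_mul]
    have step3 : ∑ W : Fin n → Bool, (ones W : ℝ≥0∞) * μ (cyl n W)
        ≤ ∑ W : Fin n → Bool, (maxOnes X n : ℝ≥0∞) * μ (cyl n W) := by
      refine Finset.sum_le_sum fun W _ => ?_
      by_cases h0 : μ (cyl n W) = 0
      · simp [h0]
      · refine mul_le_mul_left ?_ _
        refine Nat.cast_le.2 (Finset.le_sup (f := ones) ?_)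
        rw [Finset.mem_filter]
        exact ⟨Finset.mem_univ _, mem_lang_of_pos μ hX h0⟩
    have step4 : ∑ W : Fin n → Bool, (maxOnes X n : ℝ≥0∞) * μ (cyl n W)
        = (maxOnes X n : ℝ≥0∞) := by
      rw [← Finset.mul_sum, sum_measure_cyl μ n, mul_one]
    calc (n : ℝ≥0∞) * μ {x | x 0 = true} = _ := step1.symm
      _ = _ := step2
      _ ≤ _ := step3
      _ = _ := step4
  have hfin : μ {x : Omega | x 0 = true} ≠ ⊤ := measure_ne_top μ _
  have hnR : (0 : ℝ) < n := by exact_mod_cast hn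
  rw [le_div_iff₀ hnR, mul_comm]
  have := ENNReal.toReal_mono (by exact ENNReal.natCast_ne_top _) key
  rw [ENNReal.toReal_mul] at this
  simpa using this

lemma dsup_le_D {X : Set Omega} (ν : Measure Omega) [IsProbabilityMeasure ν] (hsupp : ν X = 1)
    (hσ : Measure.map shift ν = ν) {D : ℝ}
    (hD : Tendsto (fun n : ℕ => (maxOnes X n : ℝ) / n) atTop (nhds D)) :
    dsup X ≤ D := by
  have hne : Nonempty {μ : Measure Omega //
      IsProbabilityMeasure μ ∧ μ X = 1 ∧ Measure.map shift μ = μ} :=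
    ⟨⟨ν, ‹_›, hsupp, hσ⟩⟩
  refine ciSup_le fun μ => ?_
  obtain ⟨μ, hp, hX1, hmap⟩ := μ
  haveI := hp
  refine ge_of_tendsto hD ?_
  filter_upwards [eventually_ge_atTop 1] with n hn
  exact mu_one_le_ratio μ hX1 hmap n hn

end Dsup

section Kappa

lemma qmul_measurable : Measurable Qmul := by
  refine measurable_pi_iff.2 fun i => ?_
  have h1 : Measurable fun p : Omega × Omega => p.1 i :=
    (measurable_pi_apply i).comp measurable_fst
  have h2 : Measurable fun p : Omega × Omega => p.2 i :=
    (measurable_pi_apply i).comp measurable_snd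
  have h3 : Measurable fun b : Bool × Bool => b.1 && b.2 := measurable_of_countable _
  exact h3.comp (h1.prodMk h2)

lemma ones_le {n : ℕ} (W : Fin n → Bool) : ones W ≤ n := by
  have := Finset.card_filter_le (Finset.univ : Finset (Fin n)) (fun i => W i = true)
  simpa [ones] using this

lemma card_superword (n : ℕ) (W : Fin n → Bool) :
    (Finset.univ.filter fun V : Fin n → Bool => ∀ i, W i = true → V i = true).card
      = 2 ^ (n - ones W) := by
  classical
  have hcard : (Finset.univ.filter
        fun V : Fin n → Bool => ∀ i, W i = true → V i = true).card
      = Fintype.card ({i : Fin n // W i = false} → Bool) := by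
    rw [← Finset.card_univ]
    refine Finset.card_bij' (fun V _ => fun j => V j.1)
      (fun g _ => fun i => if h : W i = false then g ⟨i, h⟩ else true)
      (fun V _ => Finset.mem_univ _) (fun g _ => ?_) (fun V hV => ?_) (fun g _ => ?_)
    · rw [Finset.mem_filter]
      refine ⟨Finset.mem_univ _, fun i hi => ?_⟩
      dsimp only
      rw [dif_neg (by simp [hi])]
    · funext i
      dsimp only
      by_cases h : W i = false
      · rw [dif_pos h]
      · rw [dif_neg h]
        rw [Finset.mem_filter] at hV
        exact (hV.2 i (by revert h; cases W i <;> simp)).symm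
    · funext j
      dsimp only
      rw [dif_pos j.2]
  rw [hcard, Fintype.card_fun, Fintype.card_bool, Fintype.card_subtype]
  congr 1
  have h1 := Finset.card_filter_add_card_filter_not
    (s := (Finset.univ : Finset (Fin n))) (p := fun i => W i = true)
  simp only [Finset.card_univ, Fintype.card_fin] at h1
  have h2 : (Finset.univ.filter fun i : Fin n => ¬ W i = true)
      = (Finset.univ.filter fun i : Fin n => W i = false) := by
    apply Finset.filter_congr
    intro i _
    cases W i <;> simp
  rw [h2] at h1
  have hones : (Finset.univ.filter fun i : Fin n => W i = true).card = ones W := rfl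
  clear hcard h2
  omega

def Tset (n : ℕ) (W : Fin n → Bool) : Set Omega :=
  {y | ∀ i : Fin n, W i = true → y ((i : ℕ) : ℤ) = true}

lemma Tset_eq_biUnion (n : ℕ) (W : Fin n → Bool) :
    Tset n W = ⋃ V ∈ (Finset.univ.filter
      fun V : Fin n → Bool => ∀ i, W i = true → V i = true), cyl n V := by
  ext y
  simp only [Tset, Set.mem_setOf_eq, Set.mem_iUnion, Finset.mem_filter, Finset.mem_univ,
    true_and]
  constructor
  · intro hy
    exact ⟨fun j => y ((j : ℕ) : ℤ), fun i hi => hy i hi, fun j => rfl⟩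
  · rintro ⟨V, hV, hyV⟩ i hi
    rw [hyV i]
    exact hV i hi

lemma B_Tset (B : Measure Omega) [IsProbabilityMeasure B]
    (hB : ∀ (m : ℕ) (V : Fin m → Bool), B (cyl m V) = (2 : ℝ≥0∞)⁻¹ ^ m)
    (n : ℕ) (W : Fin n → Bool) : B (Tset n W) = (2 : ℝ≥0∞)⁻¹ ^ ones W := by
  rw [Tset_eq_biUnion]
  rw [measure_biUnion_finset (fun V _ V' _ hVV' => cyl_disjoint hVV')
    (fun V _ => measurableSet_cyl n V)]
  rw [Finset.sum_congr rfl (fun V _ => hB n V), Finset.sum_const, card_superword,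
    nsmul_eq_mul]
  have hk : ones W ≤ n := ones_le W
  have hsplit : (2 : ℝ≥0∞)⁻¹ ^ n = 2⁻¹ ^ (n - ones W) * 2⁻¹ ^ ones W := by
    rw [← pow_add]
    congr 1
    omega
  have hc : ((2 ^ (n - ones W) : ℕ) : ℝ≥0∞) = (2 : ℝ≥0∞) ^ (n - ones W) := by push_cast; rfl
  rw [hsplit, hc, ← mul_assoc, ← mul_pow, ENNReal.mul_inv_cancel (by norm_num) (by norm_num),
    one_pow, one_mul]

lemma kappa_ne_zero (ν : Measure Omega) [IsProbabilityMeasure ν]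
    (B : Measure Omega) [IsProbabilityMeasure B]
    (hB : ∀ (m : ℕ) (V : Fin m → Bool), B (cyl m V) = (2 : ℝ≥0∞)⁻¹ ^ m)
    {n : ℕ} {W : Fin n → Bool} (h : ν (cyl n W) ≠ 0) :
    Measure.map Qmul (ν.prod B) (cyl n W) ≠ 0 := by
  rw [Measure.map_apply qmul_measurable (measurableSet_cyl n W)]
  intro h0
  have hsub : (cyl n W) ×ˢ (cyl n W) ⊆ Qmul ⁻¹' (cyl n W) := by
    rintro ⟨x, y⟩ ⟨hx, hy⟩ i
    show (x ((i : ℕ) : ℤ) && y ((i : ℕ) : ℤ)) = W i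
    rw [show x ((i : ℕ) : ℤ) = W i from hx i, show y ((i : ℕ) : ℤ) = W i from hy i,
      Bool.and_self]
  have h1 := measure_mono_null hsub h0
  rw [Measure.prod_prod, hB n W] at h1
  rcases mul_eq_zero.1 h1 with h2 | h2
  · exact h h2
  · exact (pow_ne_zero n (by norm_num : (2 : ℝ≥0∞)⁻¹ ≠ 0)) h2

lemma kappa_le (ν : Measure Omega) [IsProbabilityMeasure ν]
    (B : Measure Omega) [IsProbabilityMeasure B]
    (hB : ∀ (m : ℕ) (V : Fin m → Bool), B (cyl m V) = (2 : ℝ≥0∞)⁻¹ ^ m)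
    (n : ℕ) (W : Fin n → Bool)
    (hmax : ∀ W' : Fin n → Bool, (∀ i, W i = true → W' i = true) → W' ≠ W →
      ν (cyl n W') = 0) :
    Measure.map Qmul (ν.prod B) (cyl n W) ≤ ν (cyl n W) * (2 : ℝ≥0∞)⁻¹ ^ ones W := by
  rw [Measure.map_apply qmul_measurable (measurableSet_cyl n W)]
  set s : Finset (Fin n → Bool) := Finset.univ.filter
    (fun W' : Fin n → Bool => (∀ i, W i = true → W' i = true) ∧ W' ≠ W) with hs
  set E : Set Omega := ⋃ W' ∈ s, cyl n W' with hE
  have hsub : Qmul ⁻¹' (cyl n W) ⊆ (cyl n W ×ˢ Tset n W) ∪ (E ×ˢ Set.univ) := by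
    rintro ⟨x, y⟩ hxy
    have hxy' : ∀ i : Fin n, (x ((i : ℕ) : ℤ) && y ((i : ℕ) : ℤ)) = W i := fun i => hxy i
    set W' : Fin n → Bool := fun i => x ((i : ℕ) : ℤ) with hW'
    have hge : ∀ i, W i = true → W' i = true := by
      intro i hi
      have hb : (x ((i : ℕ) : ℤ) && y ((i : ℕ) : ℤ)) = true := by rw [hxy' i, hi]
      exact (Bool.and_eq_true_iff.1 hb).1
    by_cases hEq : W' = W
    · left
      refine ⟨fun i => congrFun hEq i, fun i hi => ?_⟩
      have hxi : x ((i : ℕ) : ℤ) = true := hge i hi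
      have hb : (x ((i : ℕ) : ℤ) && y ((i : ℕ) : ℤ)) = true := by rw [hxy' i, hi]
      exact (Bool.and_eq_true_iff.1 hb).2
    · right
      have hW's : W' ∈ s := by
        rw [hs, Finset.mem_filter]
        exact ⟨Finset.mem_univ _, hge, hEq⟩
      have hxc : x ∈ cyl n W' := fun i => rfl
      exact ⟨Set.mem_iUnion₂.2 ⟨W', hW's, hxc⟩, Set.mem_univ y⟩
  have hEzero : ν E = 0 := by
    refine le_antisymm ?_ zero_le
    refine le_trans (measure_biUnion_finset_le s (cyl n)) ?_
    have : ∀ W' ∈ s, ν (cyl n W') = 0 := by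
      intro W' hW'
      rw [hs, Finset.mem_filter] at hW'
      exact hmax W' hW'.2.1 hW'.2.2
    rw [Finset.sum_congr rfl this]
    simp
  calc (ν.prod B) (Qmul ⁻¹' cyl n W)
      ≤ (ν.prod B) ((cyl n W ×ˢ Tset n W) ∪ (E ×ˢ Set.univ)) := measure_mono hsub
    _ ≤ (ν.prod B) (cyl n W ×ˢ Tset n W) + (ν.prod B) (E ×ˢ Set.univ) :=
        measure_union_le _ _
    _ = ν (cyl n W) * B (Tset n W) + ν E * B Set.univ := by
        rw [Measure.prod_prod, Measure.prod_prod]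
    _ = ν (cyl n W) * (2 : ℝ≥0∞)⁻¹ ^ ones W := by
        rw [B_Tset B hB, hEzero, zero_mul, add_zero]

end Kappa

section Final

lemma cylAt_shrink (n : ℕ) (V : Fin (2 * (n + 1)) → Bool) :
    cylAt (-((n + 1 : ℕ) : ℤ)) (2 * (n + 1)) V ⊆
      cylAt (-(n : ℤ)) (2 * n) (fun i => V ⟨(i : ℕ) + 1, by omega⟩) := by
  intro y hy i
  have h := hy ⟨(i : ℕ) + 1, by omega⟩
  show y (-(n : ℤ) + (i : ℕ)) = V ⟨(i : ℕ) + 1, by omega⟩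
  rw [← h]
  congr 1
  push_cast
  ring

/-- the centered cylinder of `x` of half-width `n` -/
def own (x : Omega) (n : ℕ) : Set Omega :=
  cylAt (-(n : ℤ)) (2 * n) (fun i => x (-(n : ℤ) + (i : ℕ)))

lemma own_antitone (x : Omega) : Antitone (own x) := by
  refine antitone_nat_of_succ_le fun n => ?_
  intro y hy i
  have h := hy ⟨(i : ℕ) + 1, by omega⟩
  have harg : (-((n + 1 : ℕ) : ℤ) + (((i : ℕ) + 1 : ℕ) : ℤ)) = -(n : ℤ) + (i : ℕ) := by
    push_cast; ring
  show y (-(n : ℤ) + (i : ℕ)) = x (-(n : ℤ) + (i : ℕ))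
  rw [← harg]
  exact h

lemma iInter_own (x : Omega) : ⋂ n, own x n = {x} := by
  ext y
  simp only [Set.mem_iInter, Set.mem_singleton_iff]
  constructor
  · intro hy
    funext j
    set n : ℕ := j.natAbs + 1 with hn
    have hb1 : (0 : ℤ) ≤ j + n := by omega
    have hb2 : (j + (n : ℤ)).toNat < 2 * n := by omega
    have h := hy n ⟨(j + (n : ℤ)).toNat, hb2⟩
    have harg : -(n : ℤ) + (((j + (n : ℤ)).toNat : ℕ) : ℤ) = j := by
      rw [Int.toNat_of_nonneg hb1]; ring
    simpa only [harg] using h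
  · rintro rfl
    exact fun n i => rfl

lemma own_eq_of_mem {x : Omega} {n : ℕ} {V : Fin (2 * n) → Bool}
    (hx : x ∈ cylAt (-(n : ℤ)) (2 * n) V) :
    own x n = cylAt (-(n : ℤ)) (2 * n) V := by
  unfold own
  have h : (fun i : Fin (2 * n) => x (-(n : ℤ) + (i : ℕ))) = V := funext fun i => hx i
  rw [h]

end Final

end S13

/-- absence of the Gibbs property. Let `ν` be an ergodic, non-atomic
invariant measure on a subshift `X` which is ones-saturated (`D_ν = D`, where `Dν` and
`D` are the limits of the corresponding sequences). If `d(X,S) = h(X̃,S)`, then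
`κ = ν * B_{1/2,1/2}` does not have the Gibbs property on `X̃`. -/
theorem stmt13 (X : Set Omega) (hcl : IsClosed X) (hne : X.Nonempty)
    (hinv : shift '' X = X)
    (ν : Measure Omega) [IsProbabilityMeasure ν] (hsupp : ν X = 1)
    (herg : Ergodic shift ν)
    (hnonatomic : ∀ x : Omega, ν {x} = 0)
    (Dν D : ℝ)
    (hDν : Tendsto (fun n : ℕ => (maxOnesPos X ν n : ℝ) / n) atTop (nhds Dν))
    (hD : Tendsto (fun n : ℕ => (maxOnes X n : ℝ) / n) atTop (nhds D))
    (hsat : Dν = D)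
    (htil : ℝ)
    (hent : Tendsto (fun n : ℕ => logb 2 ((lang (her X) n).ncard) / n) atTop (nhds htil))
    (hdh : dsup X = htil)
    (B : Measure Omega) [IsProbabilityMeasure B]
    (hB : ∀ (m : ℕ) (V : Fin m → Bool), B (cyl m V) = (2 : ℝ≥0∞)⁻¹ ^ m) :
    ¬ ∃ a : ℝ, 0 < a ∧
      ∀ (n : ℕ) (C : Fin n → Bool), C ∈ lang (her X) n →
        Measure.map Qmul (ν.prod B) (cyl n C) ≠ 0 →
        a * (2 : ℝ) ^ (-(n : ℝ) * htil) ≤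
          (Measure.map Qmul (ν.prod B) (cyl n C)).toReal := by
  rintro ⟨a, ha, hGibbs⟩
  have hσ : MeasurePreserving shift ν ν := herg.toMeasurePreserving
  -- step 1 : htil ≤ Dν
  have hD0 : dsup X ≤ D := S13.dsup_le_D ν hsupp hσ.map_eq hD
  have htilD : htil ≤ Dν := by
    rw [hsat]
    rw [hdh] at hD0
    exact hD0
  haveI : IsProbabilityMeasure (ν.prod B) := by infer_instance
  haveI : IsProbabilityMeasure (Measure.map Qmul (ν.prod B)) :=
    Measure.isProbabilityMeasure_map S13.qmul_measurable.aemeasurable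
  -- step 2 : for every n there is a word of measure at least a
  have main : ∀ n : ℕ, ∃ W : Fin n → Bool, ENNReal.ofReal a ≤ ν (cyl n W) := by
    intro n
    obtain ⟨W0, hW0lang, hW0pos⟩ := S13.exists_pos_word ν hsupp n
    have hne' : (Finset.univ.filter fun W : Fin n → Bool =>
        W ∈ lang X n ∧ ν (cyl n W) ≠ 0).Nonempty :=
      ⟨W0, by rw [Finset.mem_filter]; exact ⟨Finset.mem_univ _, hW0lang, hW0pos⟩⟩
    obtain ⟨W, hWmem, hWsup⟩ := Finset.exists_mem_eq_sup _ hne' ones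
    rw [Finset.mem_filter] at hWmem
    obtain ⟨-, hWlang, hWpos⟩ := hWmem
    have hk : maxOnesPos X ν n = ones W := hWsup
    -- n * htil ≤ ones W
    have hkn : (n : ℝ) * htil ≤ (ones W : ℝ) := by
      rcases Nat.eq_zero_or_pos n with h0 | hpos
      · subst h0; simp
      · have hnR : (0 : ℝ) < n := by exact_mod_cast hpos
        have h1 : Dν ≤ (maxOnesPos X ν n : ℝ) / n := S13.Dnu_le_ratio hσ hinv hDν n hpos
        have h2 : htil ≤ (ones W : ℝ) / n := by
          rw [← hk]
          exact le_trans htilD h1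
        calc (n : ℝ) * htil ≤ (n : ℝ) * ((ones W : ℝ) / n) := by
              exact mul_le_mul_of_nonneg_left h2 (le_of_lt hnR)
          _ = (ones W : ℝ) := by field_simp
    -- maximality
    have hmax : ∀ W' : Fin n → Bool, (∀ i, W i = true → W' i = true) → W' ≠ W →
        ν (cyl n W') = 0 := by
      intro W' hge hne''
      by_contra h0
      have hlang' : W' ∈ lang X n := S13.mem_lang_of_pos ν hsupp h0
      have hle : ones W' ≤ maxOnesPos X ν n := by
        refine Finset.le_sup (f := ones) ?_
        rw [Finset.mem_filter]
        exact ⟨Finset.mem_univ _, hlang', h0⟩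
      have hlt : ones W < ones W' := by
        apply Finset.card_lt_card
        rw [Finset.ssubset_iff_of_subset]
        · have hex : ∃ i, W' i ≠ W i := by
            by_contra hc
            push_neg at hc
            exact hne'' (funext hc)
          obtain ⟨i, hi⟩ := hex
          have hWi : W i = false := by
            cases hWi : W i with
            | false => rfl
            | true => exact absurd ((hge i hWi).trans hWi.symm) hi
          have hW'i : W' i = true := by
            cases hW'i : W' i with
            | true => rfl
            | false => rw [hWi, hW'i] at hi; simp at hi
          refine ⟨i, ?_, ?_⟩
          · rw [Finset.mem_filter]; exact ⟨Finset.mem_univ _, hW'i⟩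
          · rw [Finset.mem_filter]; simp [hWi]
        · intro i hi
          rw [Finset.mem_filter] at hi ⊢
          exact ⟨hi.1, hge i hi.2⟩
      omega
    -- Gibbs at W
    have hWher : W ∈ lang (her X) n := by
      obtain ⟨x, hx, hxW⟩ := hWlang
      exact ⟨x, ⟨x, hx, fun i => le_refl _⟩, hxW⟩
    have hκpos := S13.kappa_ne_zero ν B hB hWpos
    have hg := hGibbs n W hWher hκpos
    have hub := S13.kappa_le ν B hB n W hmax
    -- pass to reals
    have hRHSne : ν (cyl n W) * (2 : ℝ≥0∞)⁻¹ ^ ones W ≠ ⊤ :=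
      ENNReal.mul_ne_top (measure_ne_top ν _)
        (ENNReal.pow_ne_top (by simp))
    have hubR : (Measure.map Qmul (ν.prod B) (cyl n W)).toReal
        ≤ (ν (cyl n W)).toReal * ((2 : ℝ)⁻¹) ^ ones W := by
      have := ENNReal.toReal_mono hRHSne hub
      rw [ENNReal.toReal_mul] at this
      simpa [ENNReal.toReal_pow] using this
    have hpowle : ((2 : ℝ)⁻¹) ^ ones W ≤ (2 : ℝ) ^ (-(n : ℝ) * htil) := by
      have h1 : ((2 : ℝ)⁻¹) ^ ones W = (2 : ℝ) ^ (-(ones W : ℝ)) := by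
        rw [Real.rpow_neg (by norm_num), Real.rpow_natCast, inv_pow]
      rw [h1]
      apply Real.rpow_le_rpow_of_exponent_le (by norm_num)
      linarith
    have hνle : a ≤ (ν (cyl n W)).toReal := by
      have hchain : a * (2 : ℝ) ^ (-(n : ℝ) * htil)
          ≤ (ν (cyl n W)).toReal * (2 : ℝ) ^ (-(n : ℝ) * htil) := by
        calc a * (2 : ℝ) ^ (-(n : ℝ) * htil)
            ≤ (Measure.map Qmul (ν.prod B) (cyl n W)).toReal := hg
          _ ≤ (ν (cyl n W)).toReal * ((2 : ℝ)⁻¹) ^ ones W := hubR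
          _ ≤ (ν (cyl n W)).toReal * (2 : ℝ) ^ (-(n : ℝ) * htil) :=
              mul_le_mul_of_nonneg_left hpowle ENNReal.toReal_nonneg
      exact le_of_mul_le_mul_right hchain (Real.rpow_pos_of_pos (by norm_num) _)
    exact ⟨W, ENNReal.ofReal_le_of_le_toReal hνle⟩
  -- step 3 : build the decreasing sets
  set a' : ℝ≥0∞ := ENNReal.ofReal a with ha'
  have ha'pos : a' ≠ 0 := by
    simp only [ha', ne_eq, ENNReal.ofReal_eq_zero, not_le]
    exact ha
  set F : (n : ℕ) → Finset (Fin (2 * n) → Bool) := fun n =>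
    Finset.univ.filter fun V => a' ≤ ν (S13.cylAt (-(n : ℤ)) (2 * n) V) with hF
  set A : ℕ → Set Omega := fun n => ⋃ V ∈ F n, S13.cylAt (-(n : ℤ)) (2 * n) V with hA
  have hAmeas : ∀ n, MeasurableSet (A n) := fun n =>
    Finset.measurableSet_biUnion _ (fun V _ => S13.measurableSet_cylAt _ _ _)
  have hAbig : ∀ n, a' ≤ ν (A n) := by
    intro n
    obtain ⟨W, hW⟩ := main (2 * n)
    have hW' : a' ≤ ν (S13.cylAt (-(n : ℤ)) (2 * n) W) := by
      rw [S13.meas_cylAt_neg hσ]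
      exact hW
    have hmem : W ∈ F n := by
      rw [hF, Finset.mem_filter]
      exact ⟨Finset.mem_univ _, hW'⟩
    calc a' ≤ ν (S13.cylAt (-(n : ℤ)) (2 * n) W) := hW'
      _ ≤ ν (A n) := by
          refine measure_mono fun y hy => ?_
          show y ∈ ⋃ V ∈ F n, S13.cylAt (-(n : ℤ)) (2 * n) V
          simp only [Set.mem_iUnion]
          exact ⟨W, hmem, hy⟩
  have hAanti : Antitone A := by
    refine antitone_nat_of_succ_le fun n => ?_
    intro x hx
    rw [hA] at hx ⊢
    simp only [Set.mem_iUnion] at hx ⊢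
    obtain ⟨V, hVF, hxV⟩ := hx
    refine ⟨fun i => V ⟨(i : ℕ) + 1, by omega⟩, ?_, S13.cylAt_shrink n V hxV⟩
    rw [hF, Finset.mem_filter] at hVF ⊢
    refine ⟨Finset.mem_univ _, le_trans hVF.2 (measure_mono (S13.cylAt_shrink n V))⟩
  -- intersection is nonempty
  have hIbig : a' ≤ ν (⋂ n, A n) := by
    rw [Directed.measure_iInter (fun n => (hAmeas n).nullMeasurableSet)
      hAanti.directed_ge ⟨0, measure_ne_top ν _⟩]
    exact le_iInf hAbig
  have hInonempty : (⋂ n, A n).Nonempty := by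
    rw [Set.nonempty_iff_ne_empty]
    intro hemp
    rw [hemp, measure_empty] at hIbig
    exact ha'pos (le_zero_iff.1 hIbig)
  obtain ⟨x, hx⟩ := hInonempty
  -- own cylinders of x are fat
  have hown : ∀ n, a' ≤ ν (S13.own x n) := by
    intro n
    have hxA : x ∈ A n := Set.mem_iInter.1 hx n
    rw [hA] at hxA
    simp only [Set.mem_iUnion] at hxA
    obtain ⟨V, hVF, hxV⟩ := hxA
    rw [hF, Finset.mem_filter] at hVF
    rw [S13.own_eq_of_mem hxV]
    exact hVF.2
  have hsing : a' ≤ ν {x} := by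
    rw [← S13.iInter_own x]
    rw [Directed.measure_iInter (s := fun n => S13.own x n)
      (fun n => (S13.measurableSet_cylAt _ _ _).nullMeasurableSet)
      (S13.own_antitone x).directed_ge ⟨0, measure_ne_top ν _⟩]
    exact le_iInf hown
  rw [hnonatomic x] at hsing
  exact ha'pos (le_zero_iff.1 hsing)
end

section
/- Suppose ν is an invariant measure on a subshift X ⊆ {0,1}^ℤ such that κ = ν * B_{1/2,1/2} has full support on X̃ and satisfies the Gibbs property κ(C) ≥ a·2^{-|C|h} for all C ∈ L(X̃), where h = h(X̃,S). Then for every n ∈ ℕ: 0 ≤ (1/n) log₂(ℓ_n) - h ≤ (1/n) log₂(1/a), where ℓ_n = |L_n(X̃)|. -/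
open MeasureTheory Filter Real
open scoped ENNReal

attribute [local instance] Classical.propDecidable

lemma ncard_prod {α β : Type*} (s : Set α) (t : Set β) :
    (s ×ˢ t).ncard = s.ncard * t.ncard := by
  rw [← Nat.card_coe_set_eq, ← Nat.card_coe_set_eq, ← Nat.card_coe_set_eq,
    ← Nat.card_prod]
  exact Nat.card_congr (Equiv.Set.prod s t)

lemma her_shift {X : Set Omega} (hinv : shift '' X = X) (m : ℕ) {x : Omega}
    (hx : x ∈ her X) : (fun k => x (k + m)) ∈ her X := by
  obtain ⟨x', hx', hle⟩ := hx
  have key : ∀ m : ℕ, (fun k => x' (k + (m : ℤ))) ∈ X := by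
    intro m
    induction m with
    | zero => simpa using hx'
    | succ m ih =>
      have : (fun k : ℤ => x' (k + ((m : ℤ) + 1))) = shift (fun k => x' (k + (m : ℤ))) := by
        funext k; simp only [shift]; congr 1; ring
      rw [show ((m + 1 : ℕ) : ℤ) = (m : ℤ) + 1 by push_cast; ring, this, ← hinv]
      exact ⟨_, ih, rfl⟩
  exact ⟨_, key m, fun i => hle (i + m)⟩

lemma lang_submul {X : Set Omega} (hinv : shift '' X = X) (m n : ℕ) :
    (lang (her X) (m + n)).ncard ≤ (lang (her X) m).ncard * (lang (her X) n).ncard := by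
  set F : (Fin (m + n) → Bool) → (Fin m → Bool) × (Fin n → Bool) :=
    fun W => (fun i => W (Fin.castAdd n i), fun j => W (Fin.natAdd m j)) with hF
  have hFinj : Function.Injective F := by
    intro W W' hWW
    funext k
    refine Fin.addCases (fun i => ?_) (fun j => ?_) k
    · exact congrFun (congrArg Prod.fst hWW) i
    · exact congrFun (congrArg Prod.snd hWW) j
  have hsub : F '' lang (her X) (m + n) ⊆ lang (her X) m ×ˢ lang (her X) n := by
    rintro _ ⟨W, ⟨z, hz, hzW⟩, rfl⟩
    constructor
    · exact ⟨z, hz, fun i => by simpa using hzW (Fin.castAdd n i)⟩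
    · refine ⟨fun k => z (k + m), her_shift hinv m hz, fun j => ?_⟩
      have := hzW (Fin.natAdd m j)
      simp only [Fin.coe_natAdd] at this
      show z ((j : ℕ) + (m : ℤ)) = W (Fin.natAdd m j)
      rw [← this]
      congr 1
      push_cast; ring
  calc (lang (her X) (m + n)).ncard = (F '' lang (her X) (m + n)).ncard :=
        (Set.ncard_image_of_injective _ hFinj).symm
    _ ≤ (lang (her X) m ×ˢ lang (her X) n).ncard :=
        Set.ncard_le_ncard hsub (Set.toFinite _)
    _ = _ := ncard_prod _ _

/-- if `κ = ν * B_{1/2,1/2}` has full support on `X̃` and satisfies the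
Gibbs property with constant `a` and entropy `h = h(X̃,S)`, then for every `n ≥ 1`:
`0 ≤ (1/n)·log₂ ℓ_n − h ≤ (1/n)·log₂(1/a)` where `ℓ_n = |L_n(X̃)|`. -/
theorem stmt16 (X : Set Omega) (hcl : IsClosed X) (hne : X.Nonempty)
    (hinv : shift '' X = X)
    (ν : Measure Omega) [IsProbabilityMeasure ν] (hsupp : ν X = 1)
    (hinvν : Measure.map shift ν = ν)
    (B : Measure Omega) [IsProbabilityMeasure B]
    (hB : ∀ (m : ℕ) (V : Fin m → Bool), B (cyl m V) = (2 : ℝ≥0∞)⁻¹ ^ m)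
    (h : ℝ)
    (hent : Tendsto (fun n : ℕ => logb 2 ((lang (her X) n).ncard) / n) atTop (nhds h))
    (hfull : ∀ (n : ℕ) (C : Fin n → Bool), C ∈ lang (her X) n →
      Measure.map Qmul (ν.prod B) (cyl n C) ≠ 0)
    (a : ℝ) (ha : 0 < a)
    (hGibbs : ∀ (n : ℕ) (C : Fin n → Bool), C ∈ lang (her X) n →
      a * (2 : ℝ) ^ (-(n : ℝ) * h) ≤ (Measure.map Qmul (ν.prod B) (cyl n C)).toReal) :
    ∀ n : ℕ, 1 ≤ n →
      0 ≤ logb 2 ((lang (her X) n).ncard) / n - h ∧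
      logb 2 ((lang (her X) n).ncard) / n - h ≤ (1 / n) * logb 2 (1 / a) := by
  -- basic counting facts
  have hlang_ne : ∀ n : ℕ, (lang (her X) n).Nonempty := by
    intro n
    obtain ⟨x, hx⟩ := hne
    exact ⟨fun i => x ((i : ℕ) : ℤ), x, ⟨x, hx, fun i => le_refl _⟩, fun i => rfl⟩
  have hcard1 : ∀ n : ℕ, 1 ≤ (lang (her X) n).ncard := fun n =>
    (Set.ncard_pos (Set.toFinite _)).mpr (hlang_ne n)
  have hcard1R : ∀ n : ℕ, (1 : ℝ) ≤ ((lang (her X) n).ncard : ℝ) := fun n => by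
    exact_mod_cast hcard1 n
  set u : ℕ → ℝ := fun n => logb 2 ((lang (her X) n).ncard) with hu
  have husub : Subadditive u := by
    intro m n
    have hmn := lang_submul hinv m n
    have h1 : (((lang (her X) (m + n)).ncard : ℝ)) ≤
        ((lang (her X) m).ncard : ℝ) * ((lang (her X) n).ncard : ℝ) := by
      exact_mod_cast hmn
    calc u (m + n) ≤ logb 2 (((lang (her X) m).ncard : ℝ) * ((lang (her X) n).ncard : ℝ)) :=
          logb_le_logb_of_le (by norm_num) (by linarith [hcard1R (m + n)]) h1
      _ = u m + u n := logb_mul (by exact ne_of_gt (by linarith [hcard1R m]))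
          (by exact ne_of_gt (by linarith [hcard1R n]))
  have hbdd : BddBelow (Set.range fun n : ℕ => u n / n) := by
    refine ⟨0, ?_⟩
    rintro x ⟨n, rfl⟩
    have : 0 ≤ u n := logb_nonneg (by norm_num) (hcard1R n)
    positivity
  have hlim : h = husub.lim :=
    tendsto_nhds_unique hent (husub.tendsto_lim hbdd)
  intro n hn
  have hn0 : (0 : ℝ) < n := by exact_mod_cast hn
  constructor
  · rw [sub_nonneg, hlim]
    exact husub.lim_le_div hbdd (by omega)
  · -- upper bound via Gibbs
    set κ := Measure.map Qmul (ν.prod B) with hκ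
    have hκtot : κ Set.univ ≤ 1 := by
      by_cases hm : AEMeasurable Qmul (ν.prod B)
      · rw [hκ, Measure.map_apply_of_aemeasurable hm MeasurableSet.univ]
        simp
      · rw [hκ, Measure.map_of_not_aemeasurable hm]; simp
    set S : Finset (Fin n → Bool) := (Set.toFinite (lang (her X) n)).toFinset with hS
    have hmemS : ∀ C : Fin n → Bool, C ∈ S ↔ C ∈ lang (her X) n := fun C =>
      Set.Finite.mem_toFinset _
    have hdisj : (S : Set (Fin n → Bool)).PairwiseDisjoint (fun C => cyl n C) := by
      intro C _ C' _ hCC'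
      refine Set.disjoint_left.mpr fun x hx hx' => hCC' ?_
      funext i
      rw [← hx i, ← hx' i]
    have hsum_le : ∑ C ∈ S, κ (cyl n C) ≤ 1 := by
      rw [← measure_biUnion_finset hdisj fun C _ => cyl_measurable n C]
      exact le_trans (measure_mono (Set.subset_univ _)) hκtot
    have hne_top : ∀ C ∈ S, κ (cyl n C) ≠ ⊤ := by
      intro C hC
      have : κ (cyl n C) ≤ 1 :=
        le_trans (Finset.single_le_sum (f := fun C => κ (cyl n C))
          (fun _ _ => zero_le) hC) hsum_le
      exact ne_top_of_le_ne_top ENNReal.one_ne_top this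
    have hreal : (S.card : ℝ) * (a * (2 : ℝ) ^ (-(n : ℝ) * h)) ≤ 1 := by
      have h1 : (S.card : ℝ) * (a * (2 : ℝ) ^ (-(n : ℝ) * h)) =
          ∑ _C ∈ S, a * (2 : ℝ) ^ (-(n : ℝ) * h) := by
        rw [Finset.sum_const, nsmul_eq_mul]
      rw [h1]
      calc ∑ C ∈ S, a * (2 : ℝ) ^ (-(n : ℝ) * h)
          ≤ ∑ C ∈ S, (κ (cyl n C)).toReal :=
            Finset.sum_le_sum fun C hC => hGibbs n C ((hmemS C).mp hC)
        _ = (∑ C ∈ S, κ (cyl n C)).toReal := (ENNReal.toReal_sum hne_top).symm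
        _ ≤ (1 : ℝ≥0∞).toReal := ENNReal.toReal_mono ENNReal.one_ne_top hsum_le
        _ = 1 := by simp
    have hScard : (S.card : ℝ) = ((lang (her X) n).ncard : ℝ) := by
      rw [Set.ncard_eq_toFinset_card _ (Set.toFinite _)]
    rw [hScard] at hreal
    set L : ℝ := ((lang (her X) n).ncard : ℝ) with hL
    have hpos : (0 : ℝ) < a * (2 : ℝ) ^ (-(n : ℝ) * h) := by positivity
    have hL_le : L ≤ (1 / a) * (2 : ℝ) ^ ((n : ℝ) * h) := by
      rw [← le_div_iff₀ hpos] at hreal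
      calc L ≤ 1 / (a * (2 : ℝ) ^ (-(n : ℝ) * h)) := hreal
        _ = (1 / a) * (2 : ℝ) ^ ((n : ℝ) * h) := by
            rw [neg_mul, Real.rpow_neg (by norm_num : (0:ℝ) ≤ 2)]
            have h2 : (0:ℝ) < (2 : ℝ) ^ ((n : ℝ) * h) := by positivity
            field_simp
    have hlog : logb 2 L ≤ logb 2 (1 / a) + (n : ℝ) * h := by
      calc logb 2 L ≤ logb 2 ((1 / a) * (2 : ℝ) ^ ((n : ℝ) * h)) :=
            logb_le_logb_of_le (by norm_num) (by linarith [hcard1R n]) hL_le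
        _ = logb 2 (1 / a) + logb 2 ((2 : ℝ) ^ ((n : ℝ) * h)) :=
            logb_mul (by positivity) (by positivity)
        _ = logb 2 (1 / a) + (n : ℝ) * h := by
            rw [Real.logb_rpow (by norm_num) (by norm_num)]
    rw [sub_le_iff_le_add, div_le_iff₀ hn0]
    calc logb 2 L ≤ logb 2 (1 / a) + (n : ℝ) * h := hlog
      _ = (1 / (n : ℝ) * logb 2 (1 / a) + h) * n := by field_simp
end

section
/- Every point y of the subshift Y = X_{{111,1001}} (binary sequences avoiding the words 111 and 1001) is dominated by a point of X = X_{{00,111}}: for each y ∈ Y there exists x ∈ X with y ≤ x coordinatewise. Hence Y is contained in the hereditary closure of X. -/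
open MeasureTheory Filter Real
open scoped ENNReal

attribute [local instance] Classical.propDecidable

/-- offset from start of zero-run is even (a one at odd distance with zeros in between) -/
def Echk (y : Omega) (p : ℤ) : Prop :=
  ∃ k : ℕ, y (p - (2*(k:ℤ)+1)) = true ∧ ∀ m : ℕ, 1 ≤ m → m ≤ 2*k → y (p - (m:ℤ)) = false

/-- no one to the left -/
def Nchk (y : Omega) (p : ℤ) : Prop := ∀ m : ℕ, 1 ≤ m → y (p - (m:ℤ)) = false

noncomputable def Bpar (y : Omega) (p : ℤ) : Bool :=
  if Echk y p then true else if Nchk y p ∧ Even p then true else false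

lemma L1 (y : Omega) (p : ℤ) (h : y p = true) : Bpar y (p+1) = true := by
  have hE : Echk y (p+1) := ⟨0, by simpa using h, by omega⟩
  simp [Bpar, hE]

lemma L2 (y : Omega) (p : ℤ) (h : y p = false) : Bpar y (p+1) = !(Bpar y p) := by
  by_cases hE : Echk y p
  · obtain ⟨k, hk1, hk2⟩ := hE
    have hNE : ¬ Echk y (p+1) := by
      rintro ⟨k', h1, h2⟩
      rcases Nat.eq_zero_or_pos k' with rfl | hk'
      · simp at h1; simp [h] at h1
      · have h1' : y (p - (2*(k':ℤ))) = true := by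
          have : p + 1 - (2*(k':ℤ)+1) = p - 2*(k':ℤ) := by ring
          rwa [this] at h1
        rcases lt_trichotomy (2*k') (2*k+1) with hlt | heq | hgt
        · have : y (p - ((2*k' : ℕ) : ℤ)) = false := hk2 (2*k') (by omega) (by omega)
          rw [show ((2*k' : ℕ):ℤ) = 2*(k':ℤ) by push_cast; ring] at this
          rw [h1'] at this; exact absurd this (by simp)
        · omega
        · have : y (p + 1 - ((2*k+2 : ℕ) : ℤ)) = false := h2 (2*k+2) (by omega) (by omega)
          rw [show (p + 1 - ((2*k+2 : ℕ):ℤ)) = p - (2*(k:ℤ)+1) by push_cast; ring] at this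
          rw [hk1] at this; exact absurd this (by simp)
    have hNN : ¬ Nchk y (p+1) := by
      intro hN
      have := hN (2*k+2) (by omega)
      rw [show (p + 1 - ((2*k+2 : ℕ):ℤ)) = p - (2*(k:ℤ)+1) by push_cast; ring] at this
      rw [hk1] at this; exact absurd this (by simp)
    have hEp : Echk y p := ⟨k, hk1, hk2⟩
    simp [Bpar, hNE, hNN, hEp]
  · by_cases hN : Nchk y p
    · have hN' : Nchk y (p+1) := by
        intro m hm
        rcases Nat.eq_or_lt_of_le hm with heq | hlt
        · rw [show p + 1 - (m:ℤ) = p by omega]; exact h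
        · have := hN (m-1) (by omega)
          rwa [show p + 1 - (m:ℤ) = p - ((m-1 : ℕ):ℤ) by push_cast; omega]
      have hNE : ¬ Echk y (p+1) := by
        rintro ⟨k, h1, _⟩
        rcases Nat.eq_zero_or_pos k with rfl | hk
        · simp at h1; simp [h] at h1
        · have := hN (2*k) (by omega)
          rw [show p - ((2*k : ℕ):ℤ) = p + 1 - (2*(k:ℤ)+1) by push_cast; ring] at this
          rw [h1] at this; exact absurd this (by simp)
      by_cases hpe : Even p
      · have : ¬ Even (p+1) := by simp [Int.even_add_one, hpe]
        simp [Bpar, hE, hN, hpe, hNE, hN', this]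
      · have : Even (p+1) := by rw [Int.even_add_one]; exact hpe
        simp [Bpar, hE, hN, hpe, hNE, hN', this]
    · -- there is a one to the left, at minimal even distance
      have hex : ∃ m : ℕ, 1 ≤ m ∧ y (p - (m:ℤ)) = true := by
        by_contra hc
        push_neg at hc
        exact hN fun m hm => by
          have := hc m hm; exact Bool.not_eq_true _ ▸ (by simpa using this)
      classical
      let m := Nat.find hex
      have hms : 1 ≤ m ∧ y (p - (m:ℤ)) = true := Nat.find_spec hex
      have hmin : ∀ m' < m, ¬ (1 ≤ m' ∧ y (p - (m':ℤ)) = true) := fun m' h' => Nat.find_min hex h'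
      have hmodd : ¬ Odd m := by
        intro ⟨k, hk⟩
        exact hE ⟨k, by rw [show p - (2*(k:ℤ)+1) = p - (m:ℤ) by
            push_cast [hk]; ring]; exact hms.2,
          fun m' h1 h2 => by
            have := hmin m' (by omega)
            push_neg at this
            have := this h1
            cases hy : y (p - (m':ℤ)) with
            | false => rfl
            | true => exact absurd hy this⟩
      have hmeven : ∃ k : ℕ, m = 2*k := by
        rcases Nat.even_or_odd m with ⟨k, hk⟩ | ho
        · exact ⟨k, by omega⟩
        · exact absurd ho hmodd
      obtain ⟨k, hk⟩ := hmeven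
      have hE' : Echk y (p+1) := by
        refine ⟨k, ?_, ?_⟩
        · rw [show p + 1 - (2*(k:ℤ)+1) = p - (m:ℤ) by push_cast [hk]; ring]; exact hms.2
        · intro m' h1 h2
          rcases Nat.eq_or_lt_of_le h1 with heq | hlt
          · rw [show p + 1 - (m':ℤ) = p by omega]; exact h
          · have hlt' : m' - 1 < m := by omega
            have := hmin (m'-1) hlt'
            push_neg at this
            have h3 := this (by omega)
            rw [show p + 1 - (m':ℤ) = p - ((m'-1 : ℕ):ℤ) by push_cast; omega]
            cases hy : y (p - ((m'-1:ℕ):ℤ)) with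
            | false => rfl
            | true => exact absurd hy h3
      have hBp : Bpar y p = false := by simp [Bpar, hE, hN]
      rw [hBp]; simp [Bpar, hE']

def chosen (y : Omega) (p : ℤ) : Prop :=
  y p = false ∧ ((Bpar y p = true ∧ ¬(y (p+1) = false ∧ y (p+2) = true)) ∨
    (Bpar y p = false ∧ y (p+1) = true))

noncomputable def xdef (y : Omega) : Omega := fun p => if chosen y p then false else true

lemma Klem (y : Omega) (p : ℤ) (h0 : y p = false) (h1 : y (p+1) = true) : chosen y p := by
  refine ⟨h0, ?_⟩
  cases hB : Bpar y p
  · exact Or.inr ⟨rfl, h1⟩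
  · exact Or.inl ⟨rfl, by simp [h1]⟩

lemma noDouble (y : Omega) (p : ℤ) (h1 : chosen y p) (h2 : chosen y (p+1)) : False := by
  obtain ⟨h10, h1d⟩ := h1
  obtain ⟨h20, h2d⟩ := h2
  have e2 : p + 1 + 1 = p + 2 := by ring
  have hL2 : Bpar y (p+1) = !(Bpar y p) := L2 y p h10
  cases hB : Bpar y p with
  | true =>
    rcases h1d with ⟨_, hn⟩ | ⟨hf, _⟩
    · have hy2 : y (p+2) = false := by
        cases hy : y (p+2) with
        | false => rfl
        | true => exact absurd ⟨h20, hy⟩ hn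
      rcases h2d with ⟨ht, _⟩ | ⟨_, ht⟩
      · rw [hL2, hB] at ht; simp at ht
      · rw [e2, hy2] at ht; simp at ht
    · rw [hB] at hf; simp at hf
  | false =>
    rcases h1d with ⟨ht, _⟩ | ⟨_, ht⟩
    · rw [hB] at ht; simp at ht
    · rw [h20] at ht; simp at ht

lemma cover (y : Omega)
    (hY1 : ∀ i : ℤ, ¬(y i = true ∧ y (i+1) = true ∧ y (i+2) = true))
    (hY2 : ∀ i : ℤ, ¬(y i = true ∧ y (i+1) = false ∧ y (i+2) = false ∧ y (i+3) = true))
    (p : ℤ) : chosen y p ∨ chosen y (p+1) ∨ chosen y (p+2) := by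
  have e2 : p + 1 + 1 = p + 2 := by ring
  have e3 : p + 1 + 2 = p + 3 := by ring
  have e3' : p + 2 + 1 = p + 3 := by ring
  have e4 : p + 2 + 2 = p + 4 := by ring
  have e4' : p + 1 + 3 = p + 4 := by ring
  cases h0 : y p with
  | false =>
    cases h1 : y (p+1) with
    | true => exact Or.inl (Klem y p h0 h1)
    | false =>
      cases h2 : y (p+2) with
      | true => exact Or.inr (Or.inl (Klem y (p+1) h1 (by rw [e2]; exact h2)))
      | false =>
        cases hB : Bpar y p with
        | true => exact Or.inl ⟨h0, Or.inl ⟨hB, by simp [h1, h2]⟩⟩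
        | false =>
          have hB1 : Bpar y (p+1) = true := by rw [L2 y p h0, hB]; rfl
          cases h3 : y (p+3) with
          | true => exact Or.inr (Or.inr (Klem y (p+2) h2 (by rw [e3']; exact h3)))
          | false =>
            exact Or.inr (Or.inl ⟨h1, Or.inl ⟨hB1, by rw [e2, e3]; simp [h2, h3]⟩⟩)
  | true =>
    cases h1 : y (p+1) with
    | false =>
      cases h2 : y (p+2) with
      | true => exact Or.inr (Or.inl (Klem y (p+1) h1 (by rw [e2]; exact h2)))
      | false =>
        have h3 : y (p+3) = false := by
          cases h3 : y (p+3) with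
          | false => rfl
          | true => exact absurd ⟨h0, h1, h2, h3⟩ (hY2 p)
        have hB1 : Bpar y (p+1) = true := L1 y p h0
        exact Or.inr (Or.inl ⟨h1, Or.inl ⟨hB1, by rw [e2, e3]; simp [h2, h3]⟩⟩)
    | true =>
      cases h2 : y (p+2) with
      | true => exact absurd ⟨h0, h1, h2⟩ (hY1 p)
      | false =>
        cases h3 : y (p+3) with
        | true => exact Or.inr (Or.inr (Klem y (p+2) h2 (by rw [e3']; exact h3)))
        | false =>
          have h4 : y (p+4) = false := by
            cases h4 : y (p+4) with
            | false => rfl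
            | true =>
              exact absurd ⟨h1, by rw [e2]; exact h2, by rw [e3]; exact h3,
                by rw [e4']; exact h4⟩ (hY2 (p+1))
          have hB2 : Bpar y (p+2) = true := by
            have := L1 y (p+1) h1; rwa [e2] at this
          exact Or.inr (Or.inr ⟨h2, Or.inl ⟨hB2, by rw [e3', e4]; simp [h3, h4]⟩⟩)

/-- every point of the SFT `Y` avoiding `111` and `1001` is dominated
coordinatewise by a point of the SFT `X` avoiding `00` and `111`; hence `Y` is contained
in the hereditary closure of `X`. -/
theorem stmt19 (Y X : Set Omega)
    (hY : Y = {y : Omega | ∀ i : ℤ,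
      ¬(y i = true ∧ y (i + 1) = true ∧ y (i + 2) = true) ∧
      ¬(y i = true ∧ y (i + 1) = false ∧ y (i + 2) = false ∧ y (i + 3) = true)})
    (hX : X = {x : Omega | ∀ i : ℤ,
      ¬(x i = false ∧ x (i + 1) = false) ∧
      ¬(x i = true ∧ x (i + 1) = true ∧ x (i + 2) = true)}) :
    (∀ y ∈ Y, ∃ x ∈ X, ∀ i : ℤ, y i ≤ x i) ∧ Y ⊆ her X := by
  have main : ∀ y ∈ Y, ∃ x ∈ X, ∀ i : ℤ, y i ≤ x i := by
    intro y hy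
    rw [hY] at hy
    refine ⟨xdef y, ?_, ?_⟩
    · rw [hX]
      intro i
      have hch : ∀ q : ℤ, xdef y q = false ↔ chosen y q := by
        intro q
        by_cases hc : chosen y q <;> simp [xdef, hc]
      constructor
      · rintro ⟨h1, h2⟩
        exact noDouble y i ((hch i).1 h1) ((hch (i+1)).1 h2)
      · rintro ⟨h1, h2, h3⟩
        rcases cover y (fun j => (hy j).1) (fun j => (hy j).2) i with hc | hc | hc
        · rw [(hch i).2 hc] at h1; simp at h1
        · rw [(hch (i+1)).2 hc] at h2; simp at h2
        · rw [show i + 2 = i + 1 + 1 by ring, (hch (i+1+1)).2 (by rwa [show i+1+1 = i+2 by ring])] at h3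
          simp at h3
    · intro i
      cases h : y i with
      | false => exact Bool.false_le _
      | true =>
        have hnc : ¬ chosen y i := fun hc => by have := hc.1; rw [h] at this; simp at this
        simp [xdef, hnc]
  exact ⟨main, fun y hy => by
    obtain ⟨x, hx, hle⟩ := main y hy
    exact ⟨x, hx, hle⟩⟩
end
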